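/- arXiv:1802.02512 — 6 statements merged into one kernel-verified Lean document; each statement's English description precedes it below -/
import Mathlib

section
/- Suppose the reaction-rate function satisfies: k̄^r(c̃) = 0 whenever c̃_y < 0 for some y ∈ 𝒴 with γ^r_y < 0. Let (c,w) : [0,T] → ℝ^𝒴 × ℝ^ℛ be absolutely continuous with ẇ(t) ≥ 0 and ċ(t) = Γẇ(t) for a.e. t, with c(0) ≥ 0 componentwise and J(c,w) < ∞. Then c(t) ≥ 0 componentwise for all t ∈ [0,T]. -/
open MeasureTheory Real Filter Topology Set ENNReal

/-- The Boltzmann entropy function `s(j|k)`, valued in `[0,∞]`. -/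
noncomputable def bes (j k : ℝ) : ENNReal :=
  if j = 0 then ENNReal.ofReal k
  else if k = 0 then ⊤
  else ENNReal.ofReal (j * Real.log (j / k) - j + k)

/-- if the reaction rates `k̄ʳ` vanish whenever some species `y` with
`γʳ_y < 0` has negative concentration, then any absolutely continuous pair `(c,w)` with
`ẇ ≥ 0`, `ċ = Γẇ`, nonnegative initial concentration, and finite rate functional
`J(c,w) < ∞` keeps nonnegative concentrations on all of `[0,T]`. -/
theorem stmt0
    {𝒴 ℛ : Type*} [Fintype 𝒴] [Fintype ℛ]
    (T : ℝ) (hT : 0 < T)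
    (γ : ℛ → 𝒴 → ℝ)
    (kbar : (𝒴 → ℝ) → ℛ → ℝ)
    (hk_nonneg : ∀ c : 𝒴 → ℝ, (∀ y, 0 ≤ c y) → ∀ r, 0 ≤ kbar c r)
    (hk_zero : ∀ (c : 𝒴 → ℝ) (r : ℛ) (y : 𝒴), c y < 0 → γ r y < 0 → kbar c r = 0)
    (c : ℝ → 𝒴 → ℝ) (w : ℝ → ℛ → ℝ)
    (dc : ℝ → 𝒴 → ℝ) (dw : ℝ → ℛ → ℝ)
    (hdc_int : IntegrableOn dc (Set.Ioo 0 T))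
    (hdw_int : IntegrableOn dw (Set.Ioo 0 T))
    (hc_AC : ∀ t ∈ Set.Icc (0:ℝ) T, c t = c 0 + ∫ s in (0:ℝ)..t, dc s)
    (hw_AC : ∀ t ∈ Set.Icc (0:ℝ) T, w t = w 0 + ∫ s in (0:ℝ)..t, dw s)
    (hdw_nonneg : ∀ᵐ t ∂(volume.restrict (Set.Ioo (0:ℝ) T)), ∀ r, 0 ≤ dw t r)
    (hcont_eq : ∀ᵐ t ∂(volume.restrict (Set.Ioo (0:ℝ) T)),
      dc t = fun y => ∑ r, dw t r * γ r y)
    (hc0 : ∀ y, 0 ≤ c 0 y)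
    (hJ : (∫⁻ t in Set.Ioo (0:ℝ) T, ∑ r, bes (dw t r) (kbar (c t) r)) < ⊤) :
    ∀ t ∈ Set.Icc (0:ℝ) T, ∀ y, 0 ≤ c t y := by
  intro t₀ ht₀ y
  by_contra hneg
  push_neg at hneg
  set dcy : ℝ → ℝ := fun s => dc s y with hdcy_def
  have hdcy_int : IntegrableOn dcy (Set.Ioo 0 T) :=
    (ContinuousLinearMap.proj (R := ℝ) (φ := fun _ : 𝒴 => ℝ) y).integrable_comp hdc_int
  -- interval integrability helpers
  have keyc : ∀ a b : ℝ, 0 ≤ a → a ≤ b → b ≤ T → IntervalIntegrable dc volume a b := by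
    intro a b ha hab hbT
    rw [intervalIntegrable_iff_integrableOn_Ioc_of_le hab]
    exact (hdc_int.mono_set (fun x hx => ⟨lt_of_le_of_lt ha hx.1, lt_of_lt_of_le hx.2 hbT⟩)).congr_set_ae
      Ioo_ae_eq_Ioc.symm
  have keyy : ∀ a b : ℝ, 0 ≤ a → a ≤ b → b ≤ T → IntervalIntegrable dcy volume a b := by
    intro a b ha hab hbT
    rw [intervalIntegrable_iff_integrableOn_Ioc_of_le hab]
    exact (hdcy_int.mono_set (fun x hx => ⟨lt_of_le_of_lt ha hx.1, lt_of_lt_of_le hx.2 hbT⟩)).congr_set_ae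
      Ioo_ae_eq_Ioc.symm
  -- componentwise AC
  have hcy : ∀ t ∈ Set.Icc (0:ℝ) T, c t y = c 0 y + ∫ s in (0:ℝ)..t, dcy s := by
    intro t ht
    have h1 := congrFun (hc_AC t ht) y
    simp only [Pi.add_apply] at h1
    rw [h1]
    congr 1
    exact (ContinuousLinearMap.intervalIntegral_comp_comm
      (ContinuousLinearMap.proj (R := ℝ) (φ := fun _ : 𝒴 => ℝ) y) (keyc 0 t le_rfl ht.1 ht.2)).symm
  -- continuity of t ↦ c t y on Icc 0 T
  have hg_cont : ContinuousOn (fun t => c t y) (Set.Icc 0 T) := by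
    have hprim := intervalIntegral.continuousOn_primitive (μ := volume) (f := dcy) (a := 0) (b := T)
      ((integrableOn_Icc_iff_integrableOn_Ioo (f := dcy) (a := 0) (b := T)).mpr hdcy_int)
    have h2 : ContinuousOn (fun t => c 0 y + ∫ s in Set.Ioc 0 t, dcy s) (Set.Icc 0 T) :=
      continuousOn_const.add hprim
    refine h2.congr ?_
    intro t ht
    show c t y = c 0 y + ∫ s in Set.Ioc 0 t, dcy s
    rw [hcy t ht, intervalIntegral.integral_of_le ht.1]
  -- t₀ > 0 etc
  have hct0 : c t₀ y < 0 := hneg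
  -- the last time concentrations were nonnegative
  set S : Set ℝ := Set.Icc 0 t₀ ∩ (fun t => c t y) ⁻¹' Set.Ici 0 with hS_def
  have hSclosed : IsClosed S :=
    (hg_cont.mono (Set.Icc_subset_Icc le_rfl ht₀.2)).preimage_isClosed_of_isClosed
      isClosed_Icc isClosed_Ici
  have hS0 : (0:ℝ) ∈ S := ⟨Set.left_mem_Icc.mpr ht₀.1, hc0 y⟩
  have hSbdd : BddAbove S := (bddAbove_Icc).mono (Set.inter_subset_left)
  set A : ℝ := sSup S with hA_def
  have hAS : A ∈ S := hSclosed.csSup_mem ⟨0, hS0⟩ hSbdd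
  have hA0 : 0 ≤ A := hAS.1.1
  have hAt₀ : A ≤ t₀ := hAS.1.2
  have hgA : 0 ≤ c A y := hAS.2
  have hAlt : A < t₀ := lt_of_le_of_ne hAt₀ (by intro h; rw [h] at hgA; exact absurd hgA (not_le.mpr hct0))
  have hATle : A ≤ T := hAt₀.trans ht₀.2
  have hnegOn : ∀ s ∈ Set.Ioo A t₀, c s y < 0 := by
    intro s hs
    by_contra h
    push_neg at h
    have hsS : s ∈ S := ⟨⟨hA0.trans hs.1.le, hs.2.le⟩, h⟩
    exact absurd (le_csSup hSbdd hsS) (not_le.mpr hs.1)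
  have hIooAT : Set.Ioo A t₀ ⊆ Set.Ioo 0 T :=
    fun s hs => ⟨lt_of_le_of_lt hA0 hs.1, lt_of_lt_of_le hs.2 ht₀.2⟩
  have hle : (volume.restrict (Set.Ioo A t₀)) ≤ (volume.restrict (Set.Ioo (0:ℝ) T)) := Measure.restrict_mono hIooAT le_rfl
  obtain ⟨G, hGm, hGe⟩ := hdw_int.1
  have hBnull : (volume.restrict (Set.Ioo (0:ℝ) T)) {s | ¬ dw s = G s} = 0 := ae_iff.mp hGe
  set D := toMeasurable (volume.restrict (Set.Ioo (0:ℝ) T)) {s | ¬ dw s = G s} with hD_def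
  have hDmeas : MeasurableSet D := measurableSet_toMeasurable _ _
  have hDnull : (volume.restrict (Set.Ioo (0:ℝ) T)) D = 0 := by rw [hD_def, measure_toMeasurable]; exact hBnull
  -- key claim
  have hkey : ∀ r : ℛ, ∀ᵐ s ∂(volume.restrict (Set.Ioo A t₀)), γ r y < 0 → dw s r = 0 := by
    intro r
    by_cases hγ : γ r y < 0
    · have hGrm : Measurable fun s => G s r := (measurable_pi_apply r).comp hGm.measurable
      set S' : Set ℝ := (Set.Ioo A t₀ ∩ {s | 0 < G s r}) \ D with hS'_def
      have hS'meas : MeasurableSet S' :=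
        (measurableSet_Ioo.inter (measurableSet_lt measurable_const hGrm)).diff hDmeas
      have hS'top : ∀ s ∈ S', (⊤ : ℝ≥0∞) ≤ ∑ r', bes (dw s r') (kbar (c s) r') := by
        intro s hs
        obtain ⟨⟨hsI, hsG⟩, hsD⟩ := hs
        have hdwG : dw s = G s := by
          by_contra h; exact hsD (subset_toMeasurable _ _ h)
        have hdwpos : 0 < dw s r := by rw [hdwG]; exact hsG
        have hk0 : kbar (c s) r = 0 := hk_zero (c s) r y (hnegOn s hsI) hγ
        have hbes : bes (dw s r) (kbar (c s) r) = ⊤ := by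
          rw [hk0]
          unfold bes
          rw [if_neg (ne_of_gt hdwpos), if_pos rfl]
        calc (⊤ : ℝ≥0∞) = bes (dw s r) (kbar (c s) r) := hbes.symm
          _ ≤ ∑ r', bes (dw s r') (kbar (c s) r') :=
            Finset.single_le_sum (f := fun r' => bes (dw s r') (kbar (c s) r'))
              (fun i _ => zero_le) (Finset.mem_univ r)
      have hmono : ∀ t, S'.indicator (fun _ => (⊤ : ℝ≥0∞)) t
          ≤ ∑ r', bes (dw t r') (kbar (c t) r') := by
        intro t
        by_cases ht : t ∈ S'
        · rw [Set.indicator_of_mem ht]; exact hS'top t ht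
        · rw [Set.indicator_of_notMem ht]; exact zero_le
      have hbound : ⊤ * (volume.restrict (Set.Ioo (0:ℝ) T)) S' ≤ ∫⁻ t in Set.Ioo (0:ℝ) T, ∑ r', bes (dw t r') (kbar (c t) r') := by
        calc ⊤ * (volume.restrict (Set.Ioo (0:ℝ) T)) S' = ∫⁻ _ in S', (⊤ : ℝ≥0∞) ∂(volume.restrict (Set.Ioo (0:ℝ) T)) := (setLIntegral_const _ _).symm
          _ = ∫⁻ t, S'.indicator (fun _ => ⊤) t ∂(volume.restrict (Set.Ioo (0:ℝ) T)) := (lintegral_indicator hS'meas _).symm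
          _ ≤ _ := lintegral_mono hmono
      have hS'null : (volume.restrict (Set.Ioo (0:ℝ) T)) S' = 0 := by
        by_contra h
        rw [ENNReal.top_mul h] at hbound
        exact absurd (lt_of_le_of_lt hbound hJ) (lt_irrefl ⊤)
      have hS'nullA : (volume.restrict (Set.Ioo A t₀)) S' = 0 :=
        le_antisymm (le_trans (Measure.le_iff'.mp hle S') (le_of_eq hS'null)) zero_le
      have hDnullA : (volume.restrict (Set.Ioo A t₀)) D = 0 :=
        le_antisymm (le_trans (Measure.le_iff'.mp hle D) (le_of_eq hDnull)) zero_le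
      have h1 : ∀ᵐ s ∂(volume.restrict (Set.Ioo A t₀)), s ∉ S' := by
        rw [ae_iff]; simpa using hS'nullA
      have h2 : ∀ᵐ s ∂(volume.restrict (Set.Ioo A t₀)), s ∉ D := by
        rw [ae_iff]; simpa using hDnullA
      have h3 : ∀ᵐ s ∂(volume.restrict (Set.Ioo A t₀)), s ∈ Set.Ioo A t₀ := ae_restrict_mem measurableSet_Ioo
      have h4 : ∀ᵐ s ∂(volume.restrict (Set.Ioo A t₀)), ∀ r', 0 ≤ dw s r' := hdw_nonneg.filter_mono (ae_mono hle)
      filter_upwards [h1, h2, h3, h4] with s hs1 hs2 hs3 hs4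
      intro _
      have hdwG : dw s = G s := by
        by_contra h; exact hs2 (subset_toMeasurable _ _ h)
      have hnotpos : ¬ (0 < G s r) := fun h => hs1 ⟨⟨hs3, h⟩, hs2⟩
      have hle0 : dw s r ≤ 0 := by rw [hdwG]; exact not_lt.mp hnotpos
      exact le_antisymm hle0 (hs4 r)
    · filter_upwards with s
      intro h
      exact absurd h hγ
  have hall : ∀ᵐ s ∂(volume.restrict (Set.Ioo A t₀)), ∀ r, γ r y < 0 → dw s r = 0 := ae_all_iff.mpr hkey
  have hdc_nonneg : ∀ᵐ s ∂(volume.restrict (Set.Ioo A t₀)), 0 ≤ dcy s := by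
    have hceq : ∀ᵐ s ∂(volume.restrict (Set.Ioo A t₀)), dc s = fun y => ∑ r, dw s r * γ r y :=
      hcont_eq.filter_mono (ae_mono hle)
    have h4 : ∀ᵐ s ∂(volume.restrict (Set.Ioo A t₀)), ∀ r', 0 ≤ dw s r' := hdw_nonneg.filter_mono (ae_mono hle)
    filter_upwards [hall, hceq, h4] with s h1 h2 h3
    have heq : dcy s = ∑ r, dw s r * γ r y := congrFun h2 y
    rw [heq]
    apply Finset.sum_nonneg
    intro r _
    by_cases hγ : γ r y < 0
    · rw [h1 r hγ, zero_mul]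
    · exact mul_nonneg (h3 r) (not_lt.mp hγ)
  have hint1 : IntervalIntegrable dcy volume A t₀ := keyy A t₀ hA0 hAlt.le ht₀.2
  have hnn : 0 ≤ ∫ s in A..t₀, dcy s := by
    apply intervalIntegral.integral_nonneg_of_ae_restrict hAlt.le
    rw [← Measure.restrict_congr_set Ioo_ae_eq_Icc]
    exact hdc_nonneg
  have hsplit : (∫ s in (0:ℝ)..A, dcy s) + ∫ s in A..t₀, dcy s = ∫ s in (0:ℝ)..t₀, dcy s :=
    intervalIntegral.integral_add_adjacent_intervals (keyy 0 A le_rfl hA0 hATle) hint1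
  have e1 := hcy t₀ ht₀
  have e2 := hcy A ⟨hA0, hATle⟩
  have hfinal : c t₀ y = c A y + ∫ s in A..t₀, dcy s := by
    rw [e1, e2, ← hsplit]; ring
  linarith
end

section
/- Let k̄ be continuous, let μ = (μ^r)_{r∈ℛ} be a finite ℝ^ℛ-valued Borel (vector) measure on (0,T), let c(0) ∈ ℝ^𝒴_+, and define w(t) := μ((0,t]) and c(t) := c(0) + Γw(t); assume c(t) ∈ ℝ^𝒴_+ and w(t) ∈ ℝ^ℛ_+ for all t ∈ [0,T]. If sup over ζ ∈ C^1_c((0,T); ℝ^ℛ) of [∫_{(0,T)} ζ(t) · μ(dt) − ∫_0^T H(c(t), ζ(t)) dt] is finite, then every component μ^r is a nonnegative measure that is absolutely continuous with respect to Lebesgue measure; consequently (c,w) admits a representative in W^{1,1}((0,T); ℝ^𝒴 × ℝ^ℛ) with ẇ ∈ L^1((0,T); ℝ^ℛ_+). -/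
open MeasureTheory Real Set

/-- Integration of a function against a finite signed measure, via its Jordan
decomposition. -/
noncomputable def sintegral (μ : MeasureTheory.SignedMeasure ℝ) (f : ℝ → ℝ) : ℝ :=
  (∫ t, f t ∂μ.toJordanDecomposition.posPart)
    - ∫ t, f t ∂μ.toJordanDecomposition.negPart

open scoped Manifold

/-- Smooth bump: 1 on compact K, supported in open U. -/
lemma exists_bump_aux {K U : Set ℝ} (hK : IsCompact K) (hU : IsOpen U) (hKU : K ⊆ U) :
    ∃ f : ℝ → ℝ, ContDiff ℝ 1 f ∧ HasCompactSupport f ∧ tsupport f ⊆ U ∧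
      Set.EqOn f 1 K ∧ ∀ x, f x ∈ Set.Icc (0:ℝ) 1 := by
  obtain ⟨L, hL, hKL, hLU⟩ := exists_compact_between hK hU hKU
  obtain ⟨f, hf0, hf1, hf01⟩ := exists_contMDiffMap_zero_one_of_isClosed (𝓘(ℝ, ℝ)) (n := (⊤ : ℕ∞))
    (isOpen_interior (s := L)).isClosed_compl hK.isClosed
    (disjoint_compl_left_iff.2 hKL)
  have hcd : ContDiff ℝ 1 (f : ℝ → ℝ) :=
    (contMDiff_iff_contDiff.mp f.contMDiff).of_le (by exact_mod_cast le_top)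
  have hsupp : Function.support (f : ℝ → ℝ) ⊆ interior L := by
    intro x hx
    by_contra hxL
    exact hx (hf0 hxL)
  have hts : tsupport (f : ℝ → ℝ) ⊆ L :=
    closure_minimal (hsupp.trans interior_subset) hL.isClosed
  exact ⟨f, hcd, hL.of_isClosed_subset (isClosed_tsupport _) hts, hts.trans hLU, hf1, hf01⟩

/-- Signed measure apply in terms of Jordan decomposition. -/
lemma sm_apply_aux (s : SignedMeasure ℝ) {A : Set ℝ} (hA : MeasurableSet A) :
    s A = (s.toJordanDecomposition.posPart A).toReal
        - (s.toJordanDecomposition.negPart A).toReal := by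
  conv_lhs => rw [← s.toSignedMeasure_toJordanDecomposition]
  rw [JordanDecomposition.toSignedMeasure, Measure.toSignedMeasure_sub_apply hA]
  simp only [measureReal_def]

/-- If a signed measure vanishes on measurable sets disjoint from V, so do its Jordan parts. -/
lemma jordan_supp_aux (s : SignedMeasure ℝ) (V : Set ℝ)
    (h : ∀ A : Set ℝ, MeasurableSet A → A ∩ V = ∅ → s A = 0)
    {A : Set ℝ} (hA : MeasurableSet A) (hAV : A ∩ V = ∅) :
    s.toJordanDecomposition.posPart A = 0 ∧ s.toJordanDecomposition.negPart A = 0 := by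
  obtain ⟨i, hi₁, hi₂, hi₃, hpos, hneg⟩ := s.toJordanDecomposition_spec
  have hiA : (i ∩ A) ∩ V = ∅ := by
    apply Set.eq_empty_of_subset_empty; rw [← hAV]
    exact Set.inter_subset_inter_left _ Set.inter_subset_right
  have hicA : (iᶜ ∩ A) ∩ V = ∅ := by
    apply Set.eq_empty_of_subset_empty; rw [← hAV]
    exact Set.inter_subset_inter_left _ Set.inter_subset_right
  constructor
  · rw [hpos, SignedMeasure.toMeasureOfZeroLE_apply _ hi₂ hi₁ hA]
    simp [h _ (hi₁.inter hA) hiA]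
  · rw [hneg, SignedMeasure.toMeasureOfLEZero_apply _ hi₃ hi₁.compl hA]
    simp [h _ (hi₁.compl.inter hA) hicA]

lemma int_bump_lower_aux (ν : Measure ℝ) [IsFiniteMeasure ν] {f : ℝ → ℝ} {K : Set ℝ}
    (hf : Continuous f) (hfc : HasCompactSupport f) (hK : IsCompact K)
    (h1 : Set.EqOn f 1 K) (h01 : ∀ x, f x ∈ Set.Icc (0:ℝ) 1) :
    (ν K).toReal ≤ ∫ t, f t ∂ν := by
  have hfi : Integrable f ν := hf.integrable_of_hasCompactSupport hfc
  have : ∫ t in K, f t ∂ν = (ν K).toReal := by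
    rw [setIntegral_congr_fun hK.measurableSet h1]; simp [measureReal_def]
  rw [← this]
  exact setIntegral_le_integral hfi (Filter.Eventually.of_forall fun x => (h01 x).1)

lemma int_bump_upper_aux (ν : Measure ℝ) [IsFiniteMeasure ν] {f : ℝ → ℝ} {U : Set ℝ}
    (hf : Continuous f) (hfc : HasCompactSupport f) (hU : MeasurableSet U)
    (hsupp : tsupport f ⊆ U) (h01 : ∀ x, f x ∈ Set.Icc (0:ℝ) 1) :
    ∫ t, f t ∂ν ≤ (ν U).toReal := by
  have hfi : Integrable f ν := hf.integrable_of_hasCompactSupport hfc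
  have h0 : ∀ x, x ∉ U → f x = 0 := fun x hx =>
    image_eq_zero_of_notMem_tsupport (fun h => hx (hsupp h))
  rw [← setIntegral_eq_integral_of_forall_compl_eq_zero h0]
  calc ∫ t in U, f t ∂ν ≤ ∫ _t in U, (1:ℝ) ∂ν := by
        refine setIntegral_mono_on hfi.integrableOn ?_ hU (fun x _ => (h01 x).2)
        exact integrableOn_const (measure_lt_top ν U).ne
    _ = (ν U).toReal := by simp [measureReal_def]

lemma mul_le_aux {D M : ℝ} (h : ∀ l : ℝ, 0 < l → l * D ≤ M) (hM : 0 ≤ M) : D ≤ 0 := by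
  by_contra hD
  push_neg at hD
  have hl : 0 < (M + 1) / D := div_pos (by linarith) hD
  have h2 := h _ hl
  rw [div_mul_cancel₀ _ (ne_of_gt hD)] at h2
  linarith

lemma eps_le_aux {p C : ℝ} (hC : 0 ≤ C)
    (h : ∀ ε l : ℝ, 0 < ε → 0 < l → p ≤ ε + C / l) : p ≤ 0 := by
  by_contra hp
  push_neg at hp
  have hl : 0 < 3 * (C + 1) / p := by positivity
  have h2 := h (p / 3) _ (by linarith) hl
  have e : C / (3 * (C + 1) / p) = C * p / (3 * (C + 1)) := by
    field_simp
  rw [e] at h2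
  have h3 : C * p / (3 * (C + 1)) ≤ p / 3 := by
    rw [div_le_div_iff₀ (by positivity) (by norm_num)]
    nlinarith
  linarith

/-- let `k̄` be continuous, `μ` a finite `ℝ^ℛ`-valued Borel measure on
`(0,T)`, `w(t) := μ((0,t])`, `c(t) := c(0) + Γw(t)`, with `c(t) ≥ 0`, `w(t) ≥ 0`.
If `sup_{ζ ∈ C¹_c((0,T);ℝ^ℛ)} [∫ ζ·dμ − ∫ H(c(t),ζ(t)) dt] < ∞`, then each component
`μ^r` is nonnegative and absolutely continuous w.r.t. Lebesgue measure; consequently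
`(c,w)` has a `W^{1,1}` representative with derivative `ẇ ∈ L¹((0,T); ℝ^ℛ₊)`. -/
theorem stmt1
    {𝒴 ℛ : Type*} [Fintype 𝒴] [Fintype ℛ]
    (T : ℝ) (hT : 0 < T)
    (γ : ℛ → 𝒴 → ℝ)
    (kbar : (𝒴 → ℝ) → ℛ → ℝ)
    (hk_cont : ContinuousOn kbar {c : 𝒴 → ℝ | ∀ y, 0 ≤ c y})
    (hk_nonneg : ∀ c : 𝒴 → ℝ, (∀ y, 0 ≤ c y) → ∀ r, 0 ≤ kbar c r)
    (μ : ℛ → MeasureTheory.SignedMeasure ℝ)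
    (hμsupp : ∀ (r : ℛ) (A : Set ℝ), MeasurableSet A → A ∩ Set.Ioo 0 T = ∅ → μ r A = 0)
    (c0 : 𝒴 → ℝ) (hc0 : ∀ y, 0 ≤ c0 y)
    (w : ℝ → ℛ → ℝ) (hw : ∀ t r, w t r = μ r (Set.Ioc 0 t))
    (c : ℝ → 𝒴 → ℝ) (hc : ∀ t, c t = fun y => c0 y + ∑ r, w t r * γ r y)
    (hcpos : ∀ t ∈ Set.Icc (0:ℝ) T, ∀ y, 0 ≤ c t y)
    (hwpos : ∀ t ∈ Set.Icc (0:ℝ) T, ∀ r, 0 ≤ w t r)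
    (M : ℝ)
    (hsup : ∀ ζ : ℝ → ℛ → ℝ, ContDiff ℝ 1 ζ → HasCompactSupport ζ →
      tsupport ζ ⊆ Set.Ioo 0 T →
      (∑ r, sintegral (μ r) (fun t => ζ t r))
        - ∫ t in Set.Ioo (0:ℝ) T, ∑ r, kbar (c t) r * (Real.exp (ζ t r) - 1) ≤ M) :
    (∀ (r : ℛ) (A : Set ℝ), MeasurableSet A → 0 ≤ μ r A)
    ∧ (∀ (r : ℛ) (A : Set ℝ), MeasurableSet A → volume A = 0 → μ r A = 0)
    ∧ ∃ dw : ℝ → ℛ → ℝ, IntegrableOn dw (Set.Ioo 0 T)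
        ∧ (∀ᵐ t ∂(volume.restrict (Set.Ioo (0:ℝ) T)), ∀ r, 0 ≤ dw t r)
        ∧ ∀ t ∈ Set.Icc (0:ℝ) T, ∀ r, w t r = ∫ s in Set.Ioc (0:ℝ) t, dw s r := by
  classical
  have hIoo : MeasurableSet (Set.Ioo (0:ℝ) T) := measurableSet_Ioo
  -- M is nonnegative
  have hM0 : 0 ≤ M := by
    have h0 := hsup (fun _ _ => 0) contDiff_const (by
        rw [HasCompactSupport]
        have : tsupport (fun (_ : ℝ) (_ : ℛ) => (0:ℝ)) = ∅ := by
          simp only [tsupport]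
          rw [show (fun (_ : ℝ) (_ : ℛ) => (0:ℝ)) = 0 from rfl,
            Function.support_zero, closure_empty]
        rw [this]; exact isCompact_empty)
      (by
        have : tsupport (fun (_ : ℝ) (_ : ℛ) => (0:ℝ)) = ∅ := by
          simp only [tsupport]
          rw [show (fun (_ : ℝ) (_ : ℛ) => (0:ℝ)) = 0 from rfl,
            Function.support_zero, closure_empty]
        rw [this]; exact empty_subset _)
    simpa [sintegral] using h0
  -- the single-coordinate test inequality
  have key : ∀ (r : ℛ) (g : ℝ → ℝ), ContDiff ℝ 1 g → HasCompactSupport g →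
      tsupport g ⊆ Set.Ioo 0 T →
      sintegral (μ r) g
        - ∫ t in Set.Ioo (0:ℝ) T, kbar (c t) r * (Real.exp (g t) - 1) ≤ M := by
    intro r g hg1 hg2 hg3
    set ζ : ℝ → ℛ → ℝ := fun t r' => if r' = r then g t else 0 with hζdef
    have hζ1 : ContDiff ℝ 1 ζ := by
      apply contDiff_pi.2
      intro r'
      by_cases h : r' = r
      · simpa [hζdef, h] using hg1
      · simpa [hζdef, h] using contDiff_const
    have hζsupp : Function.support ζ ⊆ Function.support g := by
      intro t ht
      simp only [Function.mem_support] at ht ⊢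
      intro hgt
      apply ht
      funext r'
      by_cases h : r' = r <;> simp [hζdef, h, hgt]
    have hζts : tsupport ζ ⊆ tsupport g := closure_mono hζsupp
    have hζ2 : HasCompactSupport ζ := hg2.of_isClosed_subset (isClosed_tsupport _) hζts
    have h0 := hsup ζ hζ1 hζ2 (hζts.trans hg3)
    have h1 : ∑ r', sintegral (μ r') (fun t => ζ t r') = sintegral (μ r) g := by
      rw [Finset.sum_eq_single r]
      · simp [hζdef]
      · intro r' _ hne
        simp [hζdef, hne, sintegral]
      · simp
    have h2 : ∀ t, ∑ r', kbar (c t) r' * (Real.exp (ζ t r') - 1)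
        = kbar (c t) r * (Real.exp (g t) - 1) := by
      intro t
      rw [Finset.sum_eq_single r]
      · simp [hζdef]
      · intro r' _ hne
        simp [hζdef, hne]
      · simp
    rw [h1] at h0
    simp only [h2] at h0
    exact h0
  -- negative parts vanish
  have hN0 : ∀ r, (μ r).toJordanDecomposition.negPart = 0 := by
    intro r
    obtain ⟨s, hs, hPs, hNs⟩ := (μ r).toJordanDecomposition.mutuallySingular
    have hmain : ∀ ε : ℝ, 0 < ε →
        ((μ r).toJordanDecomposition.negPart (s ∩ Set.Ioo 0 T)).toReal ≤ 2 * ε := by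
      intro ε hε
      obtain ⟨K, hKsub, hKcomp, hKlt⟩ :=
        (hs.inter hIoo).exists_isCompact_lt_add
          (μ := (μ r).toJordanDecomposition.negPart) (measure_ne_top _ _)
          (ε := ENNReal.ofReal ε) (by simp [hε])
      obtain ⟨U, hUsub, hUopen, hUlt⟩ := Set.exists_isOpen_lt_of_lt
        (μ := (μ r).toJordanDecomposition.posPart) (s ∩ Set.Ioo 0 T) (ENNReal.ofReal ε)
        (lt_of_le_of_lt (le_trans (measure_mono Set.inter_subset_left) hPs.le)
          (by simp [hε]))
      obtain ⟨f, hf1, hf2, hf3, hfK, hf01⟩ := exists_bump_aux hKcomp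
        (hUopen.inter isOpen_Ioo)
        (Set.subset_inter (hKsub.trans hUsub)
          (hKsub.trans Set.inter_subset_right))
      -- core inequality : ∫ f dN - ∫ f dP ≤ 0
      have hIneq : (∫ t, f t ∂(μ r).toJordanDecomposition.negPart)
          - ∫ t, f t ∂(μ r).toJordanDecomposition.posPart ≤ 0 := by
        apply mul_le_aux _ hM0
        intro l hl
        have hg1 : ContDiff ℝ 1 (fun t => -l * f t) := contDiff_const.mul hf1
        have hgsupp : Function.support (fun t => -l * f t) ⊆ Function.support f := by
          intro t ht
          simp only [Function.mem_support] at ht ⊢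
          intro h0; apply ht; rw [h0, mul_zero]
        have hgts : tsupport (fun t => -l * f t) ⊆ tsupport f := closure_mono hgsupp
        have hg2 : HasCompactSupport (fun t => -l * f t) :=
          hf2.of_isClosed_subset (isClosed_tsupport _) hgts
        have hkey := key r (fun t => -l * f t) hg1 hg2
          (hgts.trans (hf3.trans Set.inter_subset_right))
        have hsin : sintegral (μ r) (fun t => -l * f t)
            = -l * ∫ t, f t ∂(μ r).toJordanDecomposition.posPart
              + l * ∫ t, f t ∂(μ r).toJordanDecomposition.negPart := by
          simp only [sintegral, neg_mul, integral_neg, integral_const_mul]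
          ring
        have hHle : ∫ t in Set.Ioo (0:ℝ) T, kbar (c t) r * (Real.exp (-l * f t) - 1) ≤ 0 := by
          apply integral_nonpos_of_ae
          filter_upwards [ae_restrict_mem hIoo] with t ht
          have h1 : 0 ≤ kbar (c t) r := hk_nonneg _ (hcpos t (Set.Ioo_subset_Icc_self ht)) r
          have h2 : Real.exp (-l * f t) ≤ 1 := by
            rw [Real.exp_le_one_iff]
            have := (hf01 t).1
            nlinarith
          exact mul_nonpos_of_nonneg_of_nonpos h1 (by linarith)
        have hrw : l * ((∫ t, f t ∂(μ r).toJordanDecomposition.negPart)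
            - ∫ t, f t ∂(μ r).toJordanDecomposition.posPart)
            = -l * ∫ t, f t ∂(μ r).toJordanDecomposition.posPart
              + l * ∫ t, f t ∂(μ r).toJordanDecomposition.negPart := by ring
        rw [hrw, ← hsin]
        linarith
      have e1 : (((μ r).toJordanDecomposition.negPart) K).toReal
          ≤ ∫ t, f t ∂(μ r).toJordanDecomposition.negPart :=
        int_bump_lower_aux _ hf1.continuous hf2 hKcomp hfK hf01
      have e2 : (∫ t, f t ∂(μ r).toJordanDecomposition.posPart)
          ≤ (((μ r).toJordanDecomposition.posPart) U).toReal :=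
        int_bump_upper_aux _ hf1.continuous hf2 hUopen.measurableSet
          (hf3.trans Set.inter_subset_left) hf01
      have e3 : (((μ r).toJordanDecomposition.posPart) U).toReal ≤ ε := by
        calc (((μ r).toJordanDecomposition.posPart) U).toReal
            ≤ (ENNReal.ofReal ε).toReal := ENNReal.toReal_mono (by simp) hUlt.le
          _ = ε := ENNReal.toReal_ofReal hε.le
      have e4 : (((μ r).toJordanDecomposition.negPart) (s ∩ Set.Ioo 0 T)).toReal
          ≤ (((μ r).toJordanDecomposition.negPart) K).toReal + ε := by
        have h1 : (((μ r).toJordanDecomposition.negPart) (s ∩ Set.Ioo 0 T)).toReal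
            ≤ (((μ r).toJordanDecomposition.negPart) K + ENNReal.ofReal ε).toReal :=
          ENNReal.toReal_mono
            (by simp [measure_ne_top, ENNReal.add_ne_top]) hKlt.le
        rwa [ENNReal.toReal_add (measure_ne_top _ _) ENNReal.ofReal_ne_top,
          ENNReal.toReal_ofReal hε.le] at h1
      linarith
    -- conclude N (s ∩ Ioo) = 0
    have hz : ((μ r).toJordanDecomposition.negPart) (s ∩ Set.Ioo 0 T) = 0 := by
      have h1 : (((μ r).toJordanDecomposition.negPart) (s ∩ Set.Ioo 0 T)).toReal ≤ 0 := by
        by_contra h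
        push_neg at h
        have := hmain _ (by linarith : (0:ℝ) <
          (((μ r).toJordanDecomposition.negPart) (s ∩ Set.Ioo 0 T)).toReal / 4)
        linarith
      have h2 : (((μ r).toJordanDecomposition.negPart) (s ∩ Set.Ioo 0 T)).toReal = 0 :=
        le_antisymm h1 ENNReal.toReal_nonneg
      exact (ENNReal.toReal_eq_zero_iff _).mp h2 |>.resolve_right (measure_ne_top _ _)
    have hcpl : ((μ r).toJordanDecomposition.negPart) ((Set.Ioo (0:ℝ) T)ᶜ) = 0 :=
      (jordan_supp_aux (μ r) _ (hμsupp r) hIoo.compl (by simp)).2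
    have huniv : ((μ r).toJordanDecomposition.negPart) Set.univ = 0 := by
      have hsub : (Set.univ : Set ℝ) ⊆ (s ∩ Set.Ioo 0 T) ∪ (sᶜ ∪ (Set.Ioo (0:ℝ) T)ᶜ) := by
        intro t _
        by_cases h1 : t ∈ s
        · by_cases h2 : t ∈ Set.Ioo (0:ℝ) T
          · exact Or.inl ⟨h1, h2⟩
          · exact Or.inr (Or.inr h2)
        · exact Or.inr (Or.inl h1)
      have hle : ((μ r).toJordanDecomposition.negPart) Set.univ
          ≤ ((μ r).toJordanDecomposition.negPart) (s ∩ Set.Ioo 0 T)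
            + (((μ r).toJordanDecomposition.negPart) sᶜ
              + ((μ r).toJordanDecomposition.negPart) ((Set.Ioo (0:ℝ) T)ᶜ)) :=
        le_trans (measure_mono hsub)
          (le_trans (measure_union_le _ _) (by gcongr; exact measure_union_le _ _))
      rw [hz, hNs, hcpl] at hle
      simpa using hle
    exact Measure.measure_univ_eq_zero.mp huniv
  -- signed measure equals positive part
  have hμP : ∀ (r : ℛ) {A : Set ℝ}, MeasurableSet A →
      μ r A = ((μ r).toJordanDecomposition.posPart A).toReal := by
    intro r A hA
    rw [sm_apply_aux (μ r) hA, hN0 r]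
    simp
  have hwP : ∀ (t : ℝ) (r : ℛ),
      w t r = ((μ r).toJordanDecomposition.posPart (Set.Ioc 0 t)).toReal := by
    intro t r
    rw [hw t r, hμP r measurableSet_Ioc]
  -- conclusion 1
  have concl1 : ∀ (r : ℛ) (A : Set ℝ), MeasurableSet A → 0 ≤ μ r A := by
    intro r A hA
    rw [hμP r hA]
    exact ENNReal.toReal_nonneg
  -- a uniform bound for kbar ∘ c on [0,T]
  set kbar' : (𝒴 → ℝ) → ℛ → ℝ := fun v => kbar (fun y => max (v y) 0) with hkb'
  have hkb'cont : Continuous kbar' := by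
    apply hk_cont.comp_continuous
    · exact continuous_pi fun y => (continuous_apply y).max continuous_const
    · intro v y
      exact le_max_right _ _
  set R : ℝ := (∑ y, |c0 y|)
      + ∑ r, ((μ r).toJordanDecomposition.posPart Set.univ).toReal * (∑ y, |γ r y|)
    with hRdef
  have hR0 : 0 ≤ R := by
    apply add_nonneg
    · exact Finset.sum_nonneg fun y _ => abs_nonneg _
    · exact Finset.sum_nonneg fun r _ => mul_nonneg ENNReal.toReal_nonneg
        (Finset.sum_nonneg fun y _ => abs_nonneg _)
  have hcball : ∀ t ∈ Set.Icc (0:ℝ) T, ‖c t‖ ≤ R := by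
    intro t ht
    rw [pi_norm_le_iff_of_nonneg hR0]
    intro y
    rw [hc t]
    show |c0 y + ∑ r, w t r * γ r y| ≤ R
    calc |c0 y + ∑ r, w t r * γ r y| ≤ |c0 y| + |∑ r, w t r * γ r y| := abs_add_le _ _
      _ ≤ (∑ y, |c0 y|) + ∑ r, |w t r * γ r y| := by
          gcongr
          · exact Finset.single_le_sum (f := fun y => |c0 y|)
              (fun y _ => abs_nonneg _) (Finset.mem_univ y)
          · exact Finset.abs_sum_le_sum_abs _ _
      _ ≤ R := by
          rw [hRdef]
          gcongr with r hr
          rw [abs_mul]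
          have h1 : |w t r| = w t r := abs_of_nonneg (hwpos t ht r)
          have h2 : w t r ≤ ((μ r).toJordanDecomposition.posPart Set.univ).toReal := by
            rw [hwP t r]
            exact ENNReal.toReal_mono (measure_ne_top _ _) (measure_mono (Set.subset_univ _))
          have h3 : |γ r y| ≤ ∑ y, |γ r y| :=
            Finset.single_le_sum (f := fun y => |γ r y|)
              (fun y _ => abs_nonneg _) (Finset.mem_univ y)
          calc |w t r| * |γ r y| ≤ w t r * (∑ y, |γ r y|) := by
                rw [h1]
                exact mul_le_mul_of_nonneg_left h3 (hwpos t ht r)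
            _ ≤ ((μ r).toJordanDecomposition.posPart Set.univ).toReal * (∑ y, |γ r y|) :=
                mul_le_mul_of_nonneg_right h2
                  (Finset.sum_nonneg fun y _ => abs_nonneg _)
  obtain ⟨v0, hv0mem, hv0max⟩ := (isCompact_closedBall (0 : 𝒴 → ℝ) R).exists_isMaxOn
    ⟨0, Metric.mem_closedBall_self hR0⟩ hkb'cont.norm.continuousOn
  set B : ℝ := ‖kbar' v0‖ with hBdef
  have hB0 : 0 ≤ B := norm_nonneg _
  have hBbd : ∀ t ∈ Set.Icc (0:ℝ) T, ∀ r, kbar (c t) r ≤ B := by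
    intro t ht r
    have h1 : kbar' (c t) = kbar (c t) := by
      have h2 : (fun y => max (c t y) 0) = c t := funext fun y => max_eq_left (hcpos t ht y)
      simp only [hkb', h2]
    calc kbar (c t) r ≤ |kbar (c t) r| := le_abs_self _
      _ ≤ ‖kbar (c t)‖ := norm_le_pi_norm (kbar (c t)) r
      _ = ‖kbar' (c t)‖ := by rw [h1]
      _ ≤ B := hv0max (mem_closedBall_zero_iff.mpr (hcball t ht))
  -- absolute continuity of the positive parts
  have hPac : ∀ (r : ℛ) (A : Set ℝ), MeasurableSet A → volume A = 0 →
      (μ r).toJordanDecomposition.posPart A = 0 := by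
    intro r A hA hvol
    have hA' : MeasurableSet (A ∩ Set.Ioo 0 T) := hA.inter hIoo
    have hmain : ∀ ε l : ℝ, 0 < ε → 0 < l →
        ((μ r).toJordanDecomposition.posPart (A ∩ Set.Ioo 0 T)).toReal
          ≤ ε + (M + B) / l := by
      intro ε l hε hl
      obtain ⟨K, hKsub, hKcomp, hKlt⟩ := hA'.exists_isCompact_lt_add
        (μ := (μ r).toJordanDecomposition.posPart) (measure_ne_top _ _)
        (ε := ENNReal.ofReal ε) (by simp [hε])
      obtain ⟨U, hUsub, hUopen, hUlt⟩ := Set.exists_isOpen_lt_of_lt (μ := volume)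
        (A ∩ Set.Ioo 0 T) (ENNReal.ofReal (Real.exp (-l)))
        (by rw [measure_mono_null Set.inter_subset_left hvol]
            simp [Real.exp_pos])
      obtain ⟨f, hf1, hf2, hf3, hfK, hf01⟩ := exists_bump_aux hKcomp
        (hUopen.inter isOpen_Ioo)
        (Set.subset_inter (hKsub.trans hUsub) (hKsub.trans Set.inter_subset_right))
      have hg1 : ContDiff ℝ 1 (fun t => l * f t) := contDiff_const.mul hf1
      have hgsupp : Function.support (fun t => l * f t) ⊆ Function.support f := by
        intro t ht
        simp only [Function.mem_support] at ht ⊢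
        intro h0; apply ht; rw [h0, mul_zero]
      have hgts : tsupport (fun t => l * f t) ⊆ tsupport f := closure_mono hgsupp
      have hg2 : HasCompactSupport (fun t => l * f t) :=
        hf2.of_isClosed_subset (isClosed_tsupport _) hgts
      have hkey := key r (fun t => l * f t) hg1 hg2
        (hgts.trans (hf3.trans Set.inter_subset_right))
      have hsin : sintegral (μ r) (fun t => l * f t)
          = l * ∫ t, f t ∂(μ r).toJordanDecomposition.posPart := by
        simp [sintegral, hN0 r, integral_const_mul]
      have hrUfin : (volume.restrict (Set.Ioo (0:ℝ) T)) U < ⊤ :=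
        lt_of_le_of_lt (le_trans (Measure.restrict_apply_le _ _) hUlt.le)
          ENNReal.ofReal_lt_top
      have hle2 : ∫ t in Set.Ioo (0:ℝ) T, kbar (c t) r * (Real.exp (l * f t) - 1)
          ≤ ∫ t in Set.Ioo (0:ℝ) T, U.indicator (fun _ => B * Real.exp l) t := by
        apply integral_mono_of_nonneg
        · filter_upwards [ae_restrict_mem hIoo] with t ht
          have h1 : 0 ≤ kbar (c t) r := hk_nonneg _ (hcpos t (Set.Ioo_subset_Icc_self ht)) r
          have h2 : 1 ≤ Real.exp (l * f t) :=
            Real.one_le_exp (mul_nonneg hl.le (hf01 t).1)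
          exact mul_nonneg h1 (by linarith)
        · rw [integrable_indicator_iff hUopen.measurableSet]
          exact integrableOn_const hrUfin.ne
        · filter_upwards [ae_restrict_mem hIoo] with t ht
          by_cases htU : t ∈ U
          · rw [Set.indicator_of_mem htU]
            have ha : kbar (c t) r ≤ B := hBbd t (Set.Ioo_subset_Icc_self ht) r
            have hb : Real.exp (l * f t) - 1 ≤ Real.exp l := by
              have h5 : l * f t ≤ l := by nlinarith [(hf01 t).2]
              have := Real.exp_le_exp.2 h5
              linarith
            have hc1 : 0 ≤ Real.exp (l * f t) - 1 := by
              linarith [Real.one_le_exp (mul_nonneg hl.le (hf01 t).1)]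
            have h1 : 0 ≤ kbar (c t) r :=
              hk_nonneg _ (hcpos t (Set.Ioo_subset_Icc_self ht)) r
            exact mul_le_mul ha hb hc1 hB0
          · have hft : f t = 0 :=
              image_eq_zero_of_notMem_tsupport (fun hmem => htU (hf3 hmem).1)
            rw [Set.indicator_of_notMem htU, hft, mul_zero, Real.exp_zero]
            simp
      have hHle : ∫ t in Set.Ioo (0:ℝ) T, kbar (c t) r * (Real.exp (l * f t) - 1) ≤ B := by
        have hval : ∫ t in Set.Ioo (0:ℝ) T, U.indicator (fun _ => B * Real.exp l) t
            = ((volume.restrict (Set.Ioo (0:ℝ) T)) U).toReal * (B * Real.exp l) := by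
          rw [integral_indicator_const _ hUopen.measurableSet, smul_eq_mul, measureReal_def]
        have hvb : ((volume.restrict (Set.Ioo (0:ℝ) T)) U).toReal ≤ Real.exp (-l) := by
          calc ((volume.restrict (Set.Ioo (0:ℝ) T)) U).toReal
              ≤ (ENNReal.ofReal (Real.exp (-l))).toReal :=
                ENNReal.toReal_mono ENNReal.ofReal_ne_top
                  (le_trans (Measure.restrict_apply_le _ _) hUlt.le)
            _ = Real.exp (-l) := ENNReal.toReal_ofReal (Real.exp_pos _).le
        have hexp : Real.exp (-l) * Real.exp l = 1 := by
          rw [← Real.exp_add]; simp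
        calc ∫ t in Set.Ioo (0:ℝ) T, kbar (c t) r * (Real.exp (l * f t) - 1)
            ≤ ((volume.restrict (Set.Ioo (0:ℝ) T)) U).toReal * (B * Real.exp l) := by
              rw [← hval]; exact hle2
          _ ≤ Real.exp (-l) * (B * Real.exp l) := by
              apply mul_le_mul_of_nonneg_right hvb
              positivity
          _ = B * (Real.exp (-l) * Real.exp l) := by ring
          _ = B := by rw [hexp, mul_one]
      have hKint : (((μ r).toJordanDecomposition.posPart) K).toReal
          ≤ ∫ t, f t ∂(μ r).toJordanDecomposition.posPart :=
        int_bump_lower_aux _ hf1.continuous hf2 hKcomp hfK hf01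
      have hfinal : l * (((μ r).toJordanDecomposition.posPart) K).toReal ≤ M + B := by
        rw [hsin] at hkey
        have h3 : l * (((μ r).toJordanDecomposition.posPart) K).toReal
            ≤ l * ∫ t, f t ∂(μ r).toJordanDecomposition.posPart :=
          mul_le_mul_of_nonneg_left hKint hl.le
        linarith
      have e4 : (((μ r).toJordanDecomposition.posPart) (A ∩ Set.Ioo 0 T)).toReal
          ≤ (((μ r).toJordanDecomposition.posPart) K).toReal + ε := by
        have h1 : (((μ r).toJordanDecomposition.posPart) (A ∩ Set.Ioo 0 T)).toReal
            ≤ (((μ r).toJordanDecomposition.posPart) K + ENNReal.ofReal ε).toReal :=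
          ENNReal.toReal_mono
            (by simp [measure_ne_top, ENNReal.add_ne_top]) hKlt.le
        rwa [ENNReal.toReal_add (measure_ne_top _ _) ENNReal.ofReal_ne_top,
          ENNReal.toReal_ofReal hε.le] at h1
      have e5 : (((μ r).toJordanDecomposition.posPart) K).toReal ≤ (M + B) / l := by
        rw [le_div_iff₀ hl]
        linarith
      linarith
    have hz : (((μ r).toJordanDecomposition.posPart) (A ∩ Set.Ioo 0 T)).toReal ≤ 0 :=
      eps_le_aux (by linarith) (fun ε l hε hl => hmain ε l hε hl)
    have hz2 : ((μ r).toJordanDecomposition.posPart) (A ∩ Set.Ioo 0 T) = 0 := by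
      have h2 : (((μ r).toJordanDecomposition.posPart) (A ∩ Set.Ioo 0 T)).toReal = 0 :=
        le_antisymm hz ENNReal.toReal_nonneg
      exact (ENNReal.toReal_eq_zero_iff _).mp h2 |>.resolve_right (measure_ne_top _ _)
    have hdiff : ((μ r).toJordanDecomposition.posPart) (A \ Set.Ioo 0 T) = 0 := by
      refine (jordan_supp_aux (μ r) _ (hμsupp r) (hA.diff hIoo) ?_).1
      ext t
      simp only [Set.mem_inter_iff, Set.mem_diff, Set.mem_empty_iff_false, iff_false]
      tauto
    have hsub : A ⊆ (A ∩ Set.Ioo 0 T) ∪ (A \ Set.Ioo 0 T) := by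
      intro t ht
      by_cases h : t ∈ Set.Ioo (0:ℝ) T
      · exact Or.inl ⟨ht, h⟩
      · exact Or.inr ⟨ht, h⟩
    have hle : ((μ r).toJordanDecomposition.posPart) A ≤ 0 := by
      calc ((μ r).toJordanDecomposition.posPart) A
          ≤ ((μ r).toJordanDecomposition.posPart) (A ∩ Set.Ioo 0 T)
            + ((μ r).toJordanDecomposition.posPart) (A \ Set.Ioo 0 T) :=
            le_trans (measure_mono hsub) (measure_union_le _ _)
        _ = 0 := by rw [hz2, hdiff, add_zero]
    exact le_antisymm hle bot_le
  -- conclusion 2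
  have concl2 : ∀ (r : ℛ) (A : Set ℝ), MeasurableSet A → volume A = 0 → μ r A = 0 := by
    intro r A hA hvol
    rw [hμP r hA, hPac r A hA hvol]
    simp
  refine ⟨concl1, concl2, ?_⟩
  have hac : ∀ r, (μ r).toJordanDecomposition.posPart ≪ volume := fun r =>
    Measure.AbsolutelyContinuous.mk (fun A hA h => hPac r A hA h)
  refine ⟨fun t r => (((μ r).toJordanDecomposition.posPart).rnDeriv volume t).toReal,
    ?_, ?_, ?_⟩
  · -- integrability
    have hcomp : ∀ r : ℛ, Integrable
        (fun t => (((μ r).toJordanDecomposition.posPart).rnDeriv volume t).toReal)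
        (volume.restrict (Set.Ioo (0:ℝ) T)) := fun r =>
      (Measure.integrable_toReal_rnDeriv).restrict
    rw [IntegrableOn]
    have heq : (fun t (r : ℛ) =>
        (((μ r).toJordanDecomposition.posPart).rnDeriv volume t).toReal)
        = fun t => ∑ r : ℛ, Pi.single r
            ((((μ r).toJordanDecomposition.posPart).rnDeriv volume t).toReal) := by
      funext t
      exact (Finset.univ_sum_single _).symm
    rw [heq]
    apply integrable_finset_sum
    intro r _
    have h1 : (fun t => Pi.single (M := fun _ : ℛ => ℝ) r
        ((((μ r).toJordanDecomposition.posPart).rnDeriv volume t).toReal))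
        = fun t => (((μ r).toJordanDecomposition.posPart).rnDeriv volume t).toReal
            • Pi.single (M := fun _ : ℛ => ℝ) r (1:ℝ) := by
      funext t
      ext r'
      by_cases h : r' = r <;> simp [Pi.single_apply, h]
    rw [h1]
    exact (hcomp r).smul_const _
  · exact Filter.Eventually.of_forall fun t r => ENNReal.toReal_nonneg
  · intro t ht r
    rw [hwP t r]
    exact (Measure.setIntegral_toReal_rnDeriv (hac r) _).symm
end

section
/- Let μ be a finite signed Borel measure on the interval (0,T) and let k : (0,T) → ℝ_{≥0} be Lebesgue-integrable. If sup over ζ ∈ C^1_c((0,T); ℝ) of [∫_{(0,T)} ζ dμ − ∫_0^T k(t)(e^{ζ(t)} − 1) dt] is finite, then μ is a nonnegative measure. -/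
open MeasureTheory Real Set
open scoped Manifold

lemma urysohn1 {s t : Set ℝ} (hs : IsClosed s) (ht : IsClosed t) (hd : Disjoint s t) :
    ∃ f : ℝ → ℝ, ContDiff ℝ 1 f ∧ EqOn f 0 s ∧ EqOn f 1 t ∧ ∀ x, f x ∈ Icc 0 1 := by
  obtain ⟨f, h0, h1, h01⟩ := exists_contMDiffMap_zero_one_of_isClosed 𝓘(ℝ, ℝ) (n := (⊤ : ℕ∞)) hs ht hd
  exact ⟨f, (f.contMDiff.contDiff).of_le (mod_cast le_top), h0, h1, h01⟩

lemma sm_apply (μ : MeasureTheory.SignedMeasure ℝ) (A : Set ℝ) (hA : MeasurableSet A) :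
    μ A = (μ.toJordanDecomposition.posPart A).toReal - (μ.toJordanDecomposition.negPart A).toReal := by
  conv_lhs => rw [← μ.toSignedMeasure_toJordanDecomposition]
  rw [JordanDecomposition.toSignedMeasure]
  exact Measure.toSignedMeasure_sub_apply hA

/-- if `μ` is a finite signed Borel measure on `(0,T)`, `k ≥ 0` is
Lebesgue-integrable, and `sup_{ζ ∈ C¹_c((0,T))} [∫ ζ dμ − ∫ k(t)(e^{ζ(t)} − 1) dt] < ∞`,
then `μ` is a nonnegative measure. -/
theorem stmt2 (T : ℝ) (hT : 0 < T)
    (μ : MeasureTheory.SignedMeasure ℝ)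
    (hμsupp : ∀ A : Set ℝ, MeasurableSet A → A ∩ Set.Ioo 0 T = ∅ → μ A = 0)
    (k : ℝ → ℝ) (hk_nonneg : ∀ t, 0 ≤ k t) (hk_int : IntegrableOn k (Set.Ioo 0 T))
    (M : ℝ)
    (hsup : ∀ ζ : ℝ → ℝ, ContDiff ℝ 1 ζ → HasCompactSupport ζ →
      tsupport ζ ⊆ Set.Ioo 0 T →
      sintegral μ ζ - ∫ t in Set.Ioo (0:ℝ) T, k t * (Real.exp (ζ t) - 1) ≤ M) :
    ∀ A : Set ℝ, MeasurableSet A → 0 ≤ μ A := by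
  set j := μ.toJordanDecomposition with hj
  suffices hneg : j.negPart Set.univ = 0 by
    intro A hA
    rw [sm_apply μ A hA]
    have h0 : j.negPart A = 0 :=
      le_antisymm (le_trans (measure_mono (subset_univ A)) hneg.le) zero_le
    rw [← hj, h0]
    simp [ENNReal.toReal_nonneg]
  by_contra hneg
  obtain ⟨s, hs_meas, hpos_s, hneg_sc⟩ := j.mutuallySingular
  -- the bad set E
  set E : Set ℝ := s ∩ Set.Ioo 0 T with hE
  have hE_meas : MeasurableSet E := hs_meas.inter measurableSet_Ioo
  have hB_meas : MeasurableSet (s ∩ (Set.Ioo 0 T)ᶜ) := hs_meas.inter measurableSet_Ioo.compl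
  have hposB : j.posPart (s ∩ (Set.Ioo 0 T)ᶜ) = 0 :=
    le_antisymm (le_trans (measure_mono inter_subset_left) hpos_s.le) zero_le
  have hμB : μ (s ∩ (Set.Ioo 0 T)ᶜ) = 0 := by
    apply hμsupp _ hB_meas
    ext x; simp only [mem_inter_iff, mem_compl_iff, mem_empty_iff_false, iff_false]
    tauto
  have hnegB : j.negPart (s ∩ (Set.Ioo 0 T)ᶜ) = 0 := by
    rw [sm_apply μ _ hB_meas, ← hj, hposB] at hμB
    simp only [ENNReal.toReal_zero, zero_sub, neg_eq_zero] at hμB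
    exact (ENNReal.toReal_eq_zero_iff _).mp hμB |>.resolve_right (measure_ne_top _ _)
  have hnegE : j.negPart E ≠ 0 := by
    intro h0
    apply hneg
    have hsub : (Set.univ : Set ℝ) ⊆ E ∪ (sᶜ ∪ s ∩ (Set.Ioo 0 T)ᶜ) := by
      intro x _
      by_cases hx : x ∈ s
      · by_cases hx2 : x ∈ Set.Ioo 0 T
        · exact Or.inl ⟨hx, hx2⟩
        · exact Or.inr (Or.inr ⟨hx, hx2⟩)
      · exact Or.inr (Or.inl hx)
    refine le_antisymm ?_ zero_le
    calc j.negPart Set.univ ≤ j.negPart (E ∪ (sᶜ ∪ s ∩ (Set.Ioo 0 T)ᶜ)) := measure_mono hsub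
      _ ≤ j.negPart E + j.negPart (sᶜ ∪ s ∩ (Set.Ioo 0 T)ᶜ) := measure_union_le _ _
      _ ≤ j.negPart E + (j.negPart sᶜ + j.negPart (s ∩ (Set.Ioo 0 T)ᶜ)) :=
          add_le_add le_rfl (measure_union_le _ _)
      _ = 0 := by rw [h0, hneg_sc, hnegB]; simp
  set c : ℝ := (j.negPart E).toReal with hc
  have hc_pos : 0 < c := ENNReal.toReal_pos hnegE (measure_ne_top _ _)
  -- compact set K inside E
  obtain ⟨K, hKE, hK, hKlt⟩ := hE_meas.exists_isCompact_lt_add (μ := j.negPart)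
    (measure_ne_top _ _) (ε := ENNReal.ofReal (c/2)) ((ENNReal.ofReal_pos.mpr (by linarith)).ne')
  have hKneg : c/2 ≤ (j.negPart K).toReal := by
    have h1 : j.negPart E ≤ j.negPart K + ENNReal.ofReal (c/2) := hKlt.le
    have h2 : (j.negPart E).toReal ≤ (j.negPart K).toReal + c/2 := by
      calc (j.negPart E).toReal ≤ (j.negPart K + ENNReal.ofReal (c/2)).toReal := by
            exact ENNReal.toReal_mono (by finiteness) h1
        _ = (j.negPart K).toReal + c/2 := by
            rw [ENNReal.toReal_add (measure_ne_top _ _) ENNReal.ofReal_ne_top,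
              ENNReal.toReal_ofReal (by linarith)]
    linarith [hc ▸ h2]
  have hKpos : j.posPart K = 0 :=
    le_antisymm (le_trans (measure_mono (hKE.trans inter_subset_left)) hpos_s.le) zero_le
  -- open set U around K with small posPart
  obtain ⟨U, hKU, hUopen, hUlt⟩ := Set.exists_isOpen_lt_of_lt (μ := j.posPart) K
    (ENNReal.ofReal (c/4)) (by rw [hKpos]; simp [ENNReal.ofReal_pos]; linarith)
  have hUval : (j.posPart U).toReal ≤ c/4 :=
    ENNReal.toReal_le_of_le_ofReal (by linarith) hUlt.le
  -- compact L between K and U ∩ Ioo 0 T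
  obtain ⟨L, hL, hKL, hLU⟩ := exists_compact_between hK (hUopen.inter isOpen_Ioo)
    (subset_inter hKU (hKE.trans inter_subset_right))
  -- smooth urysohn function
  obtain ⟨f, hf_smooth, hf0, hf1, hf01⟩ := urysohn1 (s := (interior L)ᶜ) (t := K)
    isOpen_interior.isClosed_compl hK.isClosed
    (disjoint_compl_left_iff.mpr hKL)
  have hf_supp : Function.support f ⊆ L := by
    intro x hx
    by_contra hxL
    exact hx (hf0 (fun hxi => hxL (interior_subset hxi)))
  have hf_hcs : HasCompactSupport f := HasCompactSupport.intro hL (fun x hx => by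
    by_contra h; exact hx (hf_supp h))
  have hf_ts : tsupport f ⊆ L := closure_minimal hf_supp hL.isClosed
  -- choose n
  set n : ℝ := max 1 (4*(M+1)/c) with hn
  have hn1 : (1:ℝ) ≤ n := le_max_left _ _
  have hn0 : (0:ℝ) ≤ n := by linarith
  set ζ : ℝ → ℝ := fun x => -n * f x with hζ
  have hζ_smooth : ContDiff ℝ 1 ζ := contDiff_const.mul hf_smooth
  have hζ_supp : Function.support ζ ⊆ L := fun x hx => hf_supp (by
    simp only [Function.mem_support] at hx ⊢; intro h; apply hx; simp [hζ, h])
  have hζ_hcs : HasCompactSupport ζ := HasCompactSupport.intro hL (fun x hx => by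
    by_contra h; exact hx (hζ_supp h))
  have hζ_ts : tsupport ζ ⊆ Set.Ioo 0 T :=
    (closure_minimal hζ_supp hL.isClosed).trans (hLU.trans inter_subset_right)
  -- integrability
  have hf_int_pos : Integrable f j.posPart :=
    hf_smooth.continuous.integrable_of_hasCompactSupport hf_hcs
  have hf_int_neg : Integrable f j.negPart :=
    hf_smooth.continuous.integrable_of_hasCompactSupport hf_hcs
  -- bounds on integrals
  have hIneg : (j.negPart K).toReal ≤ ∫ x, f x ∂j.negPart := by
    have h1 : ∫ x in K, f x ∂j.negPart = (j.negPart K).toReal := by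
      rw [setIntegral_congr_fun hK.measurableSet (g := fun _ => (1:ℝ)) (fun x hx => hf1 hx)]
      simp [setIntegral_const, measureReal_def]
    rw [← h1]
    exact setIntegral_le_integral hf_int_neg (Filter.Eventually.of_forall fun x => (hf01 x).1)
  have hIpos : ∫ x, f x ∂j.posPart ≤ (j.posPart U).toReal := by
    have hind : Integrable (U.indicator fun _ => (1:ℝ)) j.posPart := by
      rw [integrable_indicator_iff hUopen.measurableSet]
      exact integrableOn_const (measure_ne_top _ _)
    have hle : ∀ x, f x ≤ U.indicator (fun _ => (1:ℝ)) x := by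
      intro x
      by_cases hx : x ∈ U
      · simp [indicator_of_mem hx, (hf01 x).2]
      · simp only [indicator_of_notMem hx]
        by_cases hsx : x ∈ Function.support f
        · exact absurd (inter_subset_left (hLU (hf_supp hsx))) hx
        · simp [Function.notMem_support.mp hsx]
    calc ∫ x, f x ∂j.posPart ≤ ∫ x, U.indicator (fun _ => (1:ℝ)) x ∂j.posPart :=
          integral_mono hf_int_pos hind hle
      _ = (j.posPart U).toReal := by
          rw [integral_indicator hUopen.measurableSet]; simp [setIntegral_const, measureReal_def]
  -- compute sintegral
  have hsint : sintegral μ ζ = -n * (∫ x, f x ∂j.posPart) + n * ∫ x, f x ∂j.negPart := by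
    rw [sintegral]
    rw [show (∫ t, ζ t ∂μ.toJordanDecomposition.posPart) = -n * ∫ x, f x ∂j.posPart by
      rw [← integral_const_mul], show (∫ t, ζ t ∂μ.toJordanDecomposition.negPart) = -n * ∫ x, f x ∂j.negPart by
      rw [← integral_const_mul]]
    ring
  have hsint_lb : M + 1 ≤ sintegral μ ζ := by
    rw [hsint]
    have h1 : n * (c/2) ≤ n * ∫ x, f x ∂j.negPart :=
      mul_le_mul_of_nonneg_left (le_trans hKneg hIneg) hn0
    have h2 : -n * (∫ x, f x ∂j.posPart) ≥ -n * (c/4) := by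
      have := mul_le_mul_of_nonneg_left (hIpos.trans hUval) hn0
      nlinarith
    have h3 : (4*(M+1)/c) * (c/4) ≤ n * (c/4) :=
      mul_le_mul_of_nonneg_right (le_max_right _ _) (by linarith)
    have h4 : (4*(M+1)/c) * (c/4) = M + 1 := by field_simp
    nlinarith
  -- k term is nonpositive
  have hk_term : ∫ t in Set.Ioo (0:ℝ) T, k t * (Real.exp (ζ t) - 1) ≤ 0 := by
    apply integral_nonpos
    intro t
    simp only [Pi.zero_apply]
    have hζt : ζ t ≤ 0 := by
      simp only [hζ]
      have := (hf01 t).1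
      nlinarith
    have : Real.exp (ζ t) ≤ 1 := by
      rw [← Real.exp_zero]; exact Real.exp_le_exp.mpr hζt
    have := hk_nonneg t
    nlinarith
  have := hsup ζ hζ_smooth hζ_hcs hζ_ts
  linarith
end

section
/- Let μ be a finite nonnegative Borel measure on the interval (0,T) and let k : (0,T) → ℝ_{≥0} be Lebesgue-integrable. If sup over ζ ∈ C^1_c((0,T); ℝ) of [∫_{(0,T)} ζ dμ − ∫_0^T k(t)(e^{ζ(t)} − 1) dt] is finite, then μ is absolutely continuous with respect to Lebesgue measure on (0,T). -/
open MeasureTheory Real Set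

open scoped Manifold in
lemma smooth_bump_aux (K U : Set ℝ) (hK : IsCompact K) (hU : IsOpen U)
    (hKU : K ⊆ U) (hUb : Bornology.IsBounded U) :
    ∃ f : ℝ → ℝ, ContDiff ℝ 1 f ∧ HasCompactSupport f ∧ tsupport f ⊆ U ∧
      Set.EqOn f 1 K ∧ ∀ x, f x ∈ Set.Icc (0:ℝ) 1 := by
  obtain ⟨f, h0, h1, hf01⟩ := exists_contMDiffMap_zero_one_nhds_of_isClosed (𝓘(ℝ, ℝ)) (n := ⊤)
    (hU.isClosed_compl) hK.isClosed (disjoint_compl_left_iff.mpr hKU)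
  obtain ⟨V, hVo, hUV, hV0⟩ := eventually_nhdsSet_iff_exists.mp h0
  have hsupp : tsupport f ⊆ Vᶜ := by
    apply closure_minimal ?_ hVo.isClosed_compl
    intro x hx hxV
    exact hx (hV0 x hxV)
  have hsuppU : tsupport f ⊆ U := hsupp.trans (compl_subset_comm.mp hUV)
  refine ⟨f, ?_, ?_, hsuppU, ?_, hf01⟩
  · exact (contMDiff_iff_contDiff.mp f.contMDiff).of_le (by exact_mod_cast le_top)
  · exact Metric.isCompact_of_isClosed_isBounded (isClosed_tsupport _) (hUb.subset hsuppU)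
  · intro x hx
    exact h1.self_of_nhdsSet x hx

/-- if `μ` is a finite nonnegative Borel measure on `(0,T)`, `k ≥ 0` is
Lebesgue-integrable, and `sup_{ζ ∈ C¹_c((0,T))} [∫ ζ dμ − ∫ k(t)(e^{ζ(t)} − 1) dt] < ∞`,
then `μ` is absolutely continuous with respect to Lebesgue measure. -/
theorem stmt3 (T : ℝ) (hT : 0 < T)
    (μ : Measure ℝ) [IsFiniteMeasure μ]
    (hμsupp : μ (Set.Ioo 0 T)ᶜ = 0)
    (k : ℝ → ℝ) (hk_nonneg : ∀ t, 0 ≤ k t) (hk_int : IntegrableOn k (Set.Ioo 0 T))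
    (M : ℝ)
    (hsup : ∀ ζ : ℝ → ℝ, ContDiff ℝ 1 ζ → HasCompactSupport ζ →
      tsupport ζ ⊆ Set.Ioo 0 T →
      (∫ t, ζ t ∂μ) - ∫ t in Set.Ioo (0:ℝ) T, k t * (Real.exp (ζ t) - 1) ≤ M) :
    μ ≪ (volume : Measure ℝ) := by
  apply Measure.AbsolutelyContinuous.mk
  intro s hs hvol
  by_contra hμs0
  -- restrict to `Ioo 0 T`
  set s' : Set ℝ := s ∩ Set.Ioo 0 T with hs'def
  have hs' : MeasurableSet s' := hs.inter measurableSet_Ioo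
  have hvol' : volume s' = 0 := measure_mono_null Set.inter_subset_left hvol
  have hμs' : μ s' ≠ 0 := by
    intro h0
    apply hμs0
    have h1 : μ (s ∩ Set.Ioo 0 T) + μ (s \ Set.Ioo 0 T) = μ s :=
      measure_inter_add_diff s measurableSet_Ioo
    have h2 : μ (s \ Set.Ioo 0 T) = 0 :=
      measure_mono_null (fun x hx => hx.2) hμsupp
    rw [← h1, h2, ← hs'def, h0, add_zero]
  -- a compact subset of positive measure
  obtain ⟨K, hKs, hKc, hKlt⟩ := hs'.exists_isCompact_lt_add (measure_ne_top μ s')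
    (ε := μ s') hμs'
  have hμK : μ K ≠ 0 := by
    intro h0
    rw [h0, zero_add] at hKlt
    exact absurd hKlt (lt_irrefl _)
  have hvolK : volume K = 0 := measure_mono_null hKs hvol'
  have hKIoo : K ⊆ Set.Ioo 0 T := hKs.trans Set.inter_subset_right
  set a : ℝ := (μ K).toReal with ha_def
  have ha : 0 < a := ENNReal.toReal_pos hμK (measure_ne_top μ K)
  -- the measure with density k
  set ν : Measure ℝ := (volume.restrict (Set.Ioo 0 T)).withDensity
    (fun t => ENNReal.ofReal (k t)) with hν_def
  have hofk : ∀ t, ENNReal.ofReal (k t) = (‖k t‖₊ : ENNReal) :=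
    fun t => (Real.enorm_eq_ofReal (hk_nonneg t)).symm
  have hνfin : IsFiniteMeasure ν := by
    constructor
    rw [hν_def, withDensity_apply _ MeasurableSet.univ, Measure.restrict_univ]
    simp_rw [hofk]
    exact hk_int.2
  haveI := hνfin
  have hνK : ν K = 0 := by
    rw [hν_def, withDensity_apply _ hKc.measurableSet,
      Measure.restrict_restrict hKc.measurableSet,
      Measure.restrict_eq_zero.mpr (measure_mono_null Set.inter_subset_left hvolK)]
    exact lintegral_zero_measure _
  -- M is nonnegative
  have hM0 : (0:ℝ) ≤ M := by
    have hts : tsupport (fun _ : ℝ => (0:ℝ)) = ∅ := by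
      simp [tsupport, Function.support]
    have hcs : HasCompactSupport (fun _ : ℝ => (0:ℝ)) := by
      rw [HasCompactSupport, hts]; exact isCompact_empty
    have := hsup (fun _ => 0) contDiff_const hcs (by rw [hts]; exact empty_subset _)
    simpa using this
  -- key claim
  have key : ∀ c : ℝ, 0 < c → c * a ≤ M + 1 := by
    intro c hc
    have hec : 1 < Real.exp c := by
      calc (1:ℝ) = Real.exp 0 := Real.exp_zero.symm
        _ < Real.exp c := Real.exp_lt_exp.mpr hc
    set ε : ℝ := (Real.exp c - 1)⁻¹ with hε_def
    have hε : 0 < ε := inv_pos.mpr (by linarith)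
    -- open set U, small for ν
    obtain ⟨U0, hKU0, hU0o, hU0ν⟩ := K.exists_isOpen_lt_of_lt (μ := ν)
      (ENNReal.ofReal ε) (by rw [hνK]; exact ENNReal.ofReal_pos.mpr hε)
    set U : Set ℝ := U0 ∩ Set.Ioo 0 T with hU_def
    have hUo : IsOpen U := hU0o.inter isOpen_Ioo
    have hKU : K ⊆ U := Set.subset_inter hKU0 hKIoo
    have hUIoo : U ⊆ Set.Ioo 0 T := Set.inter_subset_right
    have hUb : Bornology.IsBounded U := (Metric.isBounded_Ioo 0 T).subset hUIoo
    have hUν : ν U < ENNReal.ofReal ε :=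
      lt_of_le_of_lt (measure_mono Set.inter_subset_left) hU0ν
    obtain ⟨f, hf1, hf2, hf3, hfK, hf01⟩ := smooth_bump_aux K U hKc hUo hKU hUb
    set ζ : ℝ → ℝ := fun t => c * f t with hζ_def
    have hζC : ContDiff ℝ 1 ζ := contDiff_const.mul hf1
    have hζsupp : tsupport ζ ⊆ tsupport f :=
      closure_mono (Function.support_mul_subset_right (fun _ => c) f)
    have hζcs : HasCompactSupport ζ := hf2.mono' ((Function.support_mul_subset_right (fun _ => c) f).trans subset_closure)
    have hζIoo : tsupport ζ ⊆ Set.Ioo 0 T := hζsupp.trans (hf3.trans hUIoo)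
    have hζ_nonneg : ∀ t, 0 ≤ ζ t := fun t => mul_nonneg hc.le (hf01 t).1
    have hζ_le : ∀ t, ζ t ≤ c := fun t => by
      have := (hf01 t).2
      calc c * f t ≤ c * 1 := by nlinarith
        _ = c := mul_one c
    -- lower bound for ∫ ζ dμ
    have hfint : Integrable f μ := hf1.continuous.integrable_of_hasCompactSupport hf2
    have hind : Integrable (K.indicator fun _ => (1:ℝ)) μ :=
      (integrable_const 1).indicator hKc.measurableSet
    have hμint : a ≤ ∫ t, f t ∂μ := by
      have h1 : ∫ t, K.indicator (fun _ => (1:ℝ)) t ∂μ = a := by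
        rw [integral_indicator hKc.measurableSet]
        simp [ha_def, measureReal_def]
      rw [← h1]
      apply integral_mono hind hfint
      intro t
      by_cases ht : t ∈ K
      · simp [Set.indicator_of_mem ht, hfK ht]
      · simp [Set.indicator_of_notMem ht, (hf01 t).1]
    have hμζ : c * a ≤ ∫ t, ζ t ∂μ := by
      rw [hζ_def]
      simp only
      rw [integral_const_mul]
      exact mul_le_mul_of_nonneg_left hμint hc.le
    -- upper bound for the k-integral
    have hζU : ∀ t, t ∉ U → ζ t = 0 := by
      intro t ht
      have : t ∉ tsupport ζ := fun h => ht (hf3 (hζsupp h))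
      exact image_eq_zero_of_notMem_tsupport this
    set g : ℝ → ℝ := fun t => k t * (Real.exp (ζ t) - 1) with hg_def
    set h : ℝ → ℝ := U.indicator (fun t => k t * (Real.exp c - 1)) with hh_def
    have hgh : ∀ t, g t ≤ h t := by
      intro t
      by_cases ht : t ∈ U
      · rw [hh_def, Set.indicator_of_mem ht]
        exact mul_le_mul_of_nonneg_left
          (sub_le_sub_right (Real.exp_le_exp.mpr (hζ_le t)) 1) (hk_nonneg t)
      · rw [hh_def, Set.indicator_of_notMem ht, hg_def]
        simp [hζU t ht]
    have hh_int : IntegrableOn h (Set.Ioo 0 T) :=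
      (hk_int.mul_const _).indicator hUo.measurableSet
    have hg_int : IntegrableOn g (Set.Ioo 0 T) := by
      apply Integrable.mono (hk_int.mul_const (Real.exp c - 1))
      · exact hk_int.aestronglyMeasurable.mul
          ((Real.continuous_exp.comp (hζC.continuous)).sub continuous_const).aestronglyMeasurable
      · apply ae_of_all
        intro t
        have h1 : (0:ℝ) ≤ Real.exp (ζ t) - 1 := by
          have := Real.one_le_exp (hζ_nonneg t)
          linarith
        have h2 : Real.exp (ζ t) - 1 ≤ Real.exp c - 1 :=
          sub_le_sub_right (Real.exp_le_exp.mpr (hζ_le t)) 1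
        rw [Real.norm_eq_abs, abs_of_nonneg (mul_nonneg (hk_nonneg t) h1),
          Real.norm_eq_abs]
        rw [abs_of_nonneg (mul_nonneg (hk_nonneg t) (by linarith : (0:ℝ) ≤ Real.exp c - 1))]
        exact mul_le_mul_of_nonneg_left h2 (hk_nonneg t)
    have hintU : ∫ t in U, k t = (ν U).toReal := by
      rw [integral_eq_lintegral_of_nonneg_ae (ae_of_all _ hk_nonneg)
        (hk_int.mono_set hUIoo).aestronglyMeasurable]
      congr 1
      rw [hν_def, withDensity_apply _ hUo.measurableSet,
        Measure.restrict_restrict hUo.measurableSet,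
        Set.inter_eq_self_of_subset_left hUIoo]
    have hνUε : (ν U).toReal ≤ ε := ENNReal.toReal_le_of_le_ofReal hε.le hUν.le
    have hkbound : ∫ t in Set.Ioo (0:ℝ) T, g t ≤ 1 := by
      have h1 : ∫ t in Set.Ioo (0:ℝ) T, g t ≤ ∫ t in Set.Ioo (0:ℝ) T, h t :=
        integral_mono hg_int hh_int (fun t => hgh t)
      have h2 : ∫ t in Set.Ioo (0:ℝ) T, h t = (Real.exp c - 1) * ∫ t in U, k t := by
        rw [hh_def, setIntegral_indicator hUo.measurableSet,
          Set.inter_eq_self_of_subset_right hUIoo]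
        rw [← integral_const_mul]
        congr 1
        ext t
        ring
      have h3 : (Real.exp c - 1) * ∫ t in U, k t ≤ (Real.exp c - 1) * ε := by
        apply mul_le_mul_of_nonneg_left _ (by linarith : (0:ℝ) ≤ Real.exp c - 1)
        rw [hintU]
        exact hνUε
      have h4 : (Real.exp c - 1) * ε = 1 := by
        rw [hε_def, mul_inv_cancel₀ (by linarith : Real.exp c - 1 ≠ 0)]
      linarith
    have := hsup ζ hζC hζcs hζIoo
    linarith
  -- contradiction
  have := key ((M + 2) / a) (by positivity)
  rw [div_mul_cancel₀ _ (ne_of_gt ha)] at this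
  linarith
end

section
/- Let k̄ be continuous. For every pair (c,w) ∈ W^{1,1}((0,T); ℝ^𝒴_+ × ℝ^ℛ_+) with ẇ(t) ≥ 0 for a.e. t, one has sup over ζ ∈ C^1_c((0,T); ℝ^ℛ) of G(c,w,ζ) equals ∫_0^T Σ_{r∈ℛ} s(ẇ^r(t) | k̄^r(c(t))) dt, where both sides take values in [0,∞] and may equal +∞ simultaneously. -/
open MeasureTheory Real Set
open scoped Convolution Topology

/-- truncated optimizer -/
noncomputable def zstar (n : ℕ) (j k : ℝ) : ℝ :=
  if j = 0 then -(n : ℝ) else if k = 0 then (n : ℝ)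
  else max (-(n : ℝ)) (min (n : ℝ) (Real.log (j / k)))

lemma zstar_abs_le (n : ℕ) (j k : ℝ) : |zstar n j k| ≤ n := by
  have hn : (0:ℝ) ≤ n := Nat.cast_nonneg n
  unfold zstar
  split_ifs with h1 h2
  · rw [abs_neg, abs_of_nonneg hn]
  · rw [abs_of_nonneg hn]
  · refine abs_le.2 ⟨le_max_left _ _, max_le (by linarith) (min_le_left _ _)⟩

lemma enn_ofReal_sum_le {ι : Type*} (s : Finset ι) (f : ι → ℝ) :
    ENNReal.ofReal (∑ i ∈ s, f i) ≤ ∑ i ∈ s, ENNReal.ofReal (f i) := by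
  classical
  induction s using Finset.induction with
  | empty => simp
  | insert a s hx ih =>
      rw [Finset.sum_insert hx, Finset.sum_insert hx]
      exact le_trans ENNReal.ofReal_add_le (add_le_add le_rfl ih)

lemma enn_ofReal_max_zero (x : ℝ) : ENNReal.ofReal (max x 0) = ENNReal.ofReal x := by
  rcases le_total x 0 with h | h
  · rw [max_eq_right h, ENNReal.ofReal_of_nonpos h, ENNReal.ofReal_zero]
  · rw [max_eq_left h]

lemma hre_le (j k ζ : ℝ) (hj : 0 < j) (hk : 0 < k) :
    ζ * j - k * (Real.exp ζ - 1) ≤ j * Real.log (j / k) - j + k := by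
  have hjk : 0 < j / k := div_pos hj hk
  have hL : Real.exp (Real.log (j / k)) = j / k := Real.exp_log hjk
  have h1 : ζ - Real.log (j / k) + 1 ≤ Real.exp (ζ - Real.log (j / k)) :=
    Real.add_one_le_exp _
  have h2 : Real.exp ζ = Real.exp (Real.log (j / k)) * Real.exp (ζ - Real.log (j / k)) := by
    rw [← Real.exp_add]; ring_nf
  have h3 : k * Real.exp ζ = j * Real.exp (ζ - Real.log (j / k)) := by
    rw [h2, hL]; field_simp
  nlinarith [mul_le_mul_of_nonneg_left h1 hj.le]

lemma hre_mono_left (j k : ℝ) (hj : 0 < j) (hk : 0 < k) {a b : ℝ} (hab : a ≤ b)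
    (hb : b ≤ Real.log (j / k)) :
    a * j - k * (Real.exp a - 1) ≤ b * j - k * (Real.exp b - 1) := by
  have hjk : 0 < j / k := div_pos hj hk
  have heb : Real.exp b ≤ j / k := by
    rw [← Real.exp_log hjk]; exact Real.exp_le_exp.2 hb
  have f2 : Real.exp b * k ≤ j := (le_div_iff₀ hk).1 heb
  have h1 : (a - b) + 1 ≤ Real.exp (a - b) := Real.add_one_le_exp _
  have h2 : Real.exp a = Real.exp b * Real.exp (a - b) := by rw [← Real.exp_add]; ring_nf
  nlinarith [mul_le_mul_of_nonneg_left h1 (Real.exp_pos b).le,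
    mul_le_mul_of_nonneg_right f2 (sub_nonneg.2 hab)]

lemma hre_mono_right (j k : ℝ) (hj : 0 < j) (hk : 0 < k) {a b : ℝ} (hba : b ≤ a)
    (hb : Real.log (j / k) ≤ b) :
    a * j - k * (Real.exp a - 1) ≤ b * j - k * (Real.exp b - 1) := by
  have hjk : 0 < j / k := div_pos hj hk
  have heb : j / k ≤ Real.exp b := by
    rw [← Real.exp_log hjk]; exact Real.exp_le_exp.2 hb
  have f2 : j ≤ Real.exp b * k := (div_le_iff₀ hk).1 heb
  have h1 : (a - b) + 1 ≤ Real.exp (a - b) := Real.add_one_le_exp _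
  have h2 : Real.exp a = Real.exp b * Real.exp (a - b) := by rw [← Real.exp_add]; ring_nf
  nlinarith [mul_le_mul_of_nonneg_left h1 (Real.exp_pos b).le,
    mul_le_mul_of_nonneg_right f2 (sub_nonneg.2 hba)]

lemma hre_zstar_nonneg (n : ℕ) (j k : ℝ) (hj : 0 ≤ j) (hk : 0 ≤ k) :
    0 ≤ zstar n j k * j - k * (Real.exp (zstar n j k) - 1) := by
  have hn : (0:ℝ) ≤ n := Nat.cast_nonneg n
  unfold zstar
  split_ifs with h1 h2
  · subst h1
    have : Real.exp (-(n:ℝ)) ≤ 1 := Real.exp_le_one_iff.2 (by linarith)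
    nlinarith
  · subst h2
    have hj' : 0 < j := hj.lt_of_ne (Ne.symm h1)
    nlinarith
  · have hj' : 0 < j := hj.lt_of_ne (Ne.symm h1)
    have hk' : 0 < k := hk.lt_of_ne (Ne.symm h2)
    set L := Real.log (j / k) with hLdef
    rcases le_or_gt 0 L with hL | hL
    · have hmin : (0:ℝ) ≤ min (n:ℝ) L := le_min hn hL
      have hz : max (-(n:ℝ)) (min (n:ℝ) L) = min (n:ℝ) L :=
        max_eq_right (by linarith)
      rw [hz]
      have h := hre_mono_left j k hj' hk' hmin (min_le_right _ _)
      simpa using h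
    · have hminL : min (n:ℝ) L = L := min_eq_right (by linarith)
      rw [hminL]
      have hz1 : L ≤ max (-(n:ℝ)) L := le_max_right _ _
      have hz2 : max (-(n:ℝ)) L ≤ 0 := max_le (by linarith) hL.le
      have h := hre_mono_right j k hj' hk' hz2 hz1
      simpa using h

lemma hre_le_bes (j k ζ : ℝ) (hj : 0 ≤ j) (hk : 0 ≤ k) :
    ENNReal.ofReal (ζ * j - k * (Real.exp ζ - 1)) ≤ bes j k := by
  unfold bes
  split_ifs with h1 h2
  · subst h1
    refine ENNReal.ofReal_le_ofReal ?_
    nlinarith [Real.exp_pos ζ]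
  · exact le_top
  · exact ENNReal.ofReal_le_ofReal
      (hre_le j k ζ (hj.lt_of_ne (Ne.symm h1)) (hk.lt_of_ne (Ne.symm h2)))

lemma hre_abs_le (j k ζ b C : ℝ) (hζ : |ζ| ≤ b) (hk : 0 ≤ k) (hkC : k ≤ C) :
    |ζ * j - k * (Real.exp ζ - 1)| ≤ b * |j| + C * (Real.exp b + 1) := by
  have hζb : ζ ≤ b := le_trans (le_abs_self ζ) hζ
  have he : Real.exp ζ ≤ Real.exp b := Real.exp_le_exp.2 hζb
  have h1 : |ζ * j| ≤ b * |j| := by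
    rw [abs_mul]
    exact mul_le_mul_of_nonneg_right hζ (abs_nonneg j)
  have h2 : |k * (Real.exp ζ - 1)| ≤ C * (Real.exp b + 1) := by
    rw [abs_mul, abs_of_nonneg hk]
    have h3 : |Real.exp ζ - 1| ≤ Real.exp b + 1 := by
      refine abs_le.2 ⟨by nlinarith [Real.exp_pos ζ, Real.exp_pos b], by nlinarith⟩
    exact mul_le_mul hkC h3 (abs_nonneg _) (le_trans hk hkC)
  calc |ζ * j - k * (Real.exp ζ - 1)| ≤ |ζ * j| + |k * (Real.exp ζ - 1)| := abs_sub _ _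
    _ ≤ b * |j| + C * (Real.exp b + 1) := add_le_add h1 h2

lemma tendsto_hre_zstar (j k : ℝ) (hj : 0 ≤ j) (hk : 0 ≤ k) :
    Filter.Tendsto (fun n : ℕ => ENNReal.ofReal
      (zstar n j k * j - k * (Real.exp (zstar n j k) - 1))) Filter.atTop (nhds (bes j k)) := by
  by_cases h1 : j = 0
  · subst h1
    have hexp : Filter.Tendsto (fun n : ℕ => Real.exp (-(n:ℝ))) Filter.atTop (nhds 0) := by
      have : Filter.Tendsto (fun n : ℕ => -(n:ℝ)) Filter.atTop Filter.atBot :=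
        Filter.tendsto_neg_atBot_iff.2 tendsto_natCast_atTop_atTop
      exact Real.tendsto_exp_atBot.comp this
    have hre : Filter.Tendsto (fun n : ℕ => -(n:ℝ) * 0 - k * (Real.exp (-(n:ℝ)) - 1))
        Filter.atTop (nhds k) := by
      have h := (tendsto_const_nhds (x := (0:ℝ)) (f := (Filter.atTop : Filter ℕ))).sub
        ((hexp.sub (tendsto_const_nhds (x := (1:ℝ)))).const_mul k)
      rw [show (0:ℝ) - k * (0 - 1) = k by ring] at h
      apply h.congr; intro n; ring
    have := (ENNReal.continuous_ofReal.tendsto k).comp hre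
    simp only [bes, if_pos rfl, zstar]
    simpa [Function.comp_def] using this
  · by_cases h2 : k = 0
    · subst h2
      have hj' : 0 < j := hj.lt_of_ne (Ne.symm h1)
      have hz : ∀ n : ℕ, zstar n j 0 = n := fun n => by
        unfold zstar; rw [if_neg h1, if_pos rfl]
      have hb : bes j 0 = ⊤ := by simp [bes, h1]
      rw [hb]
      have hatop : Filter.Tendsto (fun n : ℕ => (n:ℝ) * j) Filter.atTop Filter.atTop :=
        (tendsto_natCast_atTop_atTop (R := ℝ)).atTop_mul_const hj'
      have h := ENNReal.tendsto_ofReal_atTop.comp hatop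
      apply h.congr; intro n
      simp only [Function.comp, hz n]; ring_nf
    · have hj' : 0 < j := hj.lt_of_ne (Ne.symm h1)
      have hk' : 0 < k := hk.lt_of_ne (Ne.symm h2)
      have hjk : 0 < j / k := div_pos hj' hk'
      set L := Real.log (j / k) with hLdef
      have hev : ∀ᶠ n : ℕ in Filter.atTop, |L| ≤ (n:ℝ) :=
        tendsto_natCast_atTop_atTop.eventually_ge_atTop |L|
      have heq : ∀ᶠ n : ℕ in Filter.atTop,
          ENNReal.ofReal (zstar n j k * j - k * (Real.exp (zstar n j k) - 1)) = bes j k := by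
        filter_upwards [hev] with n hn
        have habs := abs_le.1 hn
        have hz : zstar n j k = L := by
          unfold zstar
          rw [if_neg h1, if_neg h2, min_eq_right habs.2, max_eq_right habs.1]
        rw [hz]
        have hexpL : Real.exp L = j / k := Real.exp_log hjk
        have : L * j - k * (Real.exp L - 1) = j * L - j + k := by
          rw [hexpL]; field_simp; ring
        rw [this]
        simp [bes, h1, h2, hLdef]
      exact Filter.Tendsto.congr' (Filter.EventuallyEq.symm heq) tendsto_const_nhds
open scoped Convolution Topology

/-- for continuous `k̄` and any `(c,w) ∈ W^{1,1}((0,T); ℝ^𝒴₊ × ℝ^ℛ₊)` with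
`ẇ ≥ 0` a.e., the supremum of `G(c,w,ζ)` over `ζ ∈ C¹_c((0,T); ℝ^ℛ)` equals
`∫₀ᵀ Σ_r s(ẇ^r(t) | k̄^r(c(t))) dt`, as values in `[0,∞]`. -/
theorem stmt4
    {𝒴 ℛ : Type*} [Fintype 𝒴] [Fintype ℛ]
    (T : ℝ) (hT : 0 < T)
    (kbar : (𝒴 → ℝ) → ℛ → ℝ)
    (hk_cont : ContinuousOn kbar {c : 𝒴 → ℝ | ∀ y, 0 ≤ c y})
    (hk_nonneg : ∀ c : 𝒴 → ℝ, (∀ y, 0 ≤ c y) → ∀ r, 0 ≤ kbar c r)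
    (c : ℝ → 𝒴 → ℝ) (w : ℝ → ℛ → ℝ)
    (dc : ℝ → 𝒴 → ℝ) (dw : ℝ → ℛ → ℝ)
    (hdc_int : IntegrableOn dc (Set.Ioo 0 T))
    (hdw_int : IntegrableOn dw (Set.Ioo 0 T))
    (hc_AC : ∀ t ∈ Set.Icc (0:ℝ) T, c t = c 0 + ∫ s in (0:ℝ)..t, dc s)
    (hw_AC : ∀ t ∈ Set.Icc (0:ℝ) T, w t = w 0 + ∫ s in (0:ℝ)..t, dw s)
    (hcpos : ∀ t ∈ Set.Icc (0:ℝ) T, ∀ y, 0 ≤ c t y)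
    (hwpos : ∀ t ∈ Set.Icc (0:ℝ) T, ∀ r, 0 ≤ w t r)
    (hdw_nonneg : ∀ᵐ t ∂(volume.restrict (Set.Ioo (0:ℝ) T)), ∀ r, 0 ≤ dw t r) :
    (⨆ ζ : {ζ : ℝ → ℛ → ℝ //
        ContDiff ℝ 1 ζ ∧ HasCompactSupport ζ ∧ tsupport ζ ⊆ Set.Ioo 0 T},
      ENNReal.ofReal (∫ t in Set.Ioo (0:ℝ) T,
        ∑ r, ((ζ : ℝ → ℛ → ℝ) t r * dw t r
          - kbar (c t) r * (Real.exp ((ζ : ℝ → ℛ → ℝ) t r) - 1))))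
    = ∫⁻ t in Set.Ioo (0:ℝ) T, ∑ r, bes (dw t r) (kbar (c t) r) := by
  classical
  haveI : IsFiniteMeasure (volume.restrict (Set.Ioo (0:ℝ) T)) :=
    ⟨by rw [Measure.restrict_apply_univ]; exact measure_Ioo_lt_top⟩
  -- measurable representative of dw
  have hdwm : AEStronglyMeasurable dw (volume.restrict (Set.Ioo 0 T)) :=
    hdw_int.aestronglyMeasurable
  set dm : ℝ → ℛ → ℝ := hdwm.mk dw with hdmdef
  have hdm_sm : StronglyMeasurable dm := hdwm.stronglyMeasurable_mk
  have hdm_ae : dw =ᵐ[volume.restrict (Set.Ioo 0 T)] dm := hdwm.ae_eq_mk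
  have hdm_meas : ∀ r : ℛ, Measurable fun t => dm t r := fun r =>
    (measurable_pi_apply r).comp hdm_sm.measurable
  have hdm_int : IntegrableOn dm (Set.Ioo 0 T) := (integrable_congr hdm_ae).1 hdw_int
  -- continuity of c on Icc
  have hdc_icc : IntegrableOn dc (Set.Icc 0 T) := by
    rwa [integrableOn_Icc_iff_integrableOn_Ioo]
  have hprim : ContinuousOn (fun t => ∫ s in (0:ℝ)..t, dc s) (Set.Icc 0 T) := by
    have h := intervalIntegral.continuousOn_primitive_interval (a := 0) (b := T)
      (f := dc) (μ := volume) (by rwa [uIcc_of_le hT.le])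
    rwa [uIcc_of_le hT.le] at h
  have hc_cont : ContinuousOn c (Set.Icc 0 T) :=
    (continuousOn_const.add hprim).congr fun t ht => hc_AC t ht
  -- clamp to Icc
  set cl : ℝ → ℝ := fun t => max 0 (min t T) with hcl
  have hcl_cont : Continuous cl := continuous_const.max (continuous_id.min continuous_const)
  have hcl_mem : ∀ t, cl t ∈ Set.Icc (0:ℝ) T := fun t =>
    ⟨le_max_left _ _, max_le hT.le (min_le_right _ _)⟩
  have hcl_eq : ∀ t ∈ Set.Icc (0:ℝ) T, cl t = t := fun t ht => by
    simp only [hcl]; rw [min_eq_left ht.2, max_eq_right ht.1]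
  set Km : ℝ → ℛ → ℝ := fun t => kbar (c (cl t)) with hKmdef
  have hKm_cont : Continuous Km := by
    have h1 : Continuous fun t => c (cl t) := hc_cont.comp_continuous hcl_cont hcl_mem
    exact hk_cont.comp_continuous h1 fun t => hcpos _ (hcl_mem t)
  have hKm_measr : ∀ r : ℛ, Measurable fun t => Km t r := fun r =>
    ((continuous_apply r).comp hKm_cont).measurable
  have hKm_nonneg : ∀ t r, 0 ≤ Km t r := fun t r => hk_nonneg _ (hcpos _ (hcl_mem t)) r
  have hKm_eq : ∀ t ∈ Set.Icc (0:ℝ) T, Km t = kbar (c t) := fun t ht => by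
    simp only [hKmdef, hcl_eq t ht]
  -- uniform bound on Km
  obtain ⟨C0, hC0⟩ := (isCompact_Icc (a := (0:ℝ)) (b := T)).exists_bound_of_continuousOn
    hKm_cont.continuousOn
  set C : ℝ := max C0 0 with hCdef
  have hKmC : ∀ t r, Km t r ≤ C := by
    intro t r
    have h1 : Km t = Km (cl t) := by
      simp only [hKmdef]; rw [hcl_eq (cl t) (hcl_mem t)]
    have h2 : ‖Km (cl t)‖ ≤ C0 := hC0 _ (hcl_mem t)
    calc Km t r ≤ |Km t r| := le_abs_self _
      _ = ‖Km t r‖ := (Real.norm_eq_abs _).symm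
      _ ≤ ‖Km t‖ := norm_le_pi_norm (Km t) r
      _ ≤ C0 := by rw [h1]; exact h2
      _ ≤ C := le_max_left _ _
  -- the truncation scale
  set δ : ℕ → ℝ := fun n => T / ((n : ℝ) + 3) with hδdef
  have hδ_pos : ∀ n, 0 < δ n := fun n => div_pos hT (by positivity)
  have hδ_lt : ∀ n, δ n < T / 2 := fun n => by
    have h3 : (2:ℝ) < (n:ℝ) + 3 := by
      have := Nat.cast_nonneg (α := ℝ) n; linarith
    exact div_lt_div_of_pos_left hT two_pos h3
  have hδ_tend : Filter.Tendsto δ Filter.atTop (𝓝 0) := by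
    have h1 : Filter.Tendsto (fun n : ℕ => (n : ℝ) + 3) Filter.atTop Filter.atTop :=
      Filter.tendsto_atTop_add_const_right _ 3 tendsto_natCast_atTop_atTop
    have h2 := h1.inv_tendsto_atTop.const_mul T
    rw [mul_zero] at h2
    refine h2.congr fun n => ?_
    simp [hδdef, div_eq_mul_inv]
  -- the truncated optimizer
  set ζn : ℕ → ℝ → ℛ → ℝ := fun n t r =>
    if t ∈ Set.Icc (δ n) (T - δ n) then zstar n (dm t r) (Km t r) else 0 with hζndef
  have hζn_meas : ∀ n r, Measurable fun t => ζn n t r := by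
    intro n r
    have h1 : Measurable fun t => dm t r := hdm_meas r
    have h2 : Measurable fun t => Km t r := hKm_measr r
    have hz : Measurable fun t => zstar n (dm t r) (Km t r) := by
      simp only [zstar]
      refine Measurable.ite (h1 (measurableSet_singleton 0)) measurable_const ?_
      refine Measurable.ite (h2 (measurableSet_singleton 0)) measurable_const ?_
      exact measurable_const.max (measurable_const.min (h1.div h2).log)
    exact Measurable.ite measurableSet_Icc hz measurable_const
  have hζn_bd : ∀ n t r, |ζn n t r| ≤ n := by
    intro n t r
    simp only [hζndef]
    split_ifs
    · exact zstar_abs_le n _ _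
    · simpa using (Nat.cast_nonneg (α := ℝ) n)
  have hζn_supp : ∀ n t, t ∉ Set.Icc (δ n) (T - δ n) → ζn n t = 0 := fun n t ht =>
    funext fun r => if_neg ht
  have hζn_int : ∀ n, Integrable (ζn n) volume := by
    intro n
    have hmeas : AEStronglyMeasurable (ζn n) volume :=
      (measurable_pi_lambda _ (hζn_meas n)).aestronglyMeasurable
    refine Integrable.mono'
      (g := Set.indicator (Set.Icc (δ n) (T - δ n)) fun _ => (n : ℝ)) ?_ hmeas ?_
    · exact (integrableOn_const measure_Icc_lt_top.ne).integrable_indicator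
        measurableSet_Icc
    · refine Filter.Eventually.of_forall fun t => ?_
      by_cases ht : t ∈ Set.Icc (δ n) (T - δ n)
      · rw [Set.indicator_of_mem ht]
        refine (pi_norm_le_iff_of_nonneg (Nat.cast_nonneg n)).2 fun r => ?_
        rw [Real.norm_eq_abs]; exact hζn_bd n t r
      · rw [Set.indicator_of_notMem ht, hζn_supp n t ht]; simp
  -- the integrands
  set g : ℕ → ℝ → ℝ := fun n t =>
    ∑ r, (ζn n t r * dm t r - Km t r * (Real.exp (ζn n t r) - 1)) with hgdef
  have hg_meas : ∀ n, Measurable (g n) := fun n =>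
    Finset.measurable_sum _ fun r _ =>
      ((hζn_meas n r).mul (hdm_meas r)).sub
        ((hKm_measr r).mul ((hζn_meas n r).exp.sub measurable_const))
  have hdm_nonneg : ∀ᵐ t ∂(volume.restrict (Set.Ioo 0 T)), ∀ r, 0 ≤ dm t r := by
    filter_upwards [hdw_nonneg, hdm_ae] with t h1 h2 r
    rw [← congrFun h2 r]; exact h1 r
  have hg_nonneg : ∀ n, 0 ≤ᵐ[volume.restrict (Set.Ioo 0 T)] g n := by
    intro n
    filter_upwards [hdm_nonneg] with t ht
    refine Finset.sum_nonneg fun r _ => ?_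
    by_cases hmem : t ∈ Set.Icc (δ n) (T - δ n)
    · simp only [hζndef, if_pos hmem]
      exact hre_zstar_nonneg n _ _ (ht r) (hKm_nonneg t r)
    · simp only [hζndef, if_neg hmem]; simp
  have hg_int : ∀ n, IntegrableOn (g n) (Set.Ioo 0 T) := by
    intro n
    refine Integrable.mono'
      (g := fun t => (Fintype.card ℛ : ℝ) * ((n : ℝ) * ‖dm t‖ + C * (Real.exp n + 1)))
      ?_ (hg_meas n).aestronglyMeasurable ?_
    · exact ((hdm_int.norm.const_mul _).add (integrable_const _)).const_mul _
    · refine Filter.Eventually.of_forall fun t => ?_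
      have hb : ∀ r : ℛ, |ζn n t r * dm t r - Km t r * (Real.exp (ζn n t r) - 1)|
          ≤ (n : ℝ) * ‖dm t‖ + C * (Real.exp n + 1) := by
        intro r
        have h1 := hre_abs_le (dm t r) (Km t r) (ζn n t r) n C (hζn_bd n t r)
          (hKm_nonneg t r) (hKmC t r)
        refine h1.trans (add_le_add (mul_le_mul_of_nonneg_left ?_ (Nat.cast_nonneg n)) le_rfl)
        rw [← Real.norm_eq_abs]; exact norm_le_pi_norm (dm t) r
      calc ‖g n t‖ = |∑ r, (ζn n t r * dm t r - Km t r * (Real.exp (ζn n t r) - 1))| := rfl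
        _ ≤ ∑ r, |ζn n t r * dm t r - Km t r * (Real.exp (ζn n t r) - 1)| :=
            Finset.abs_sum_le_sum_abs _ _
        _ ≤ ∑ _r : ℛ, ((n : ℝ) * ‖dm t‖ + C * (Real.exp n + 1)) :=
            Finset.sum_le_sum fun r _ => hb r
        _ = (Fintype.card ℛ : ℝ) * ((n : ℝ) * ‖dm t‖ + C * (Real.exp n + 1)) := by
            rw [Finset.sum_const, nsmul_eq_mul]; simp
  -- KEY STEP: for each n, the supremum dominates ofReal (∫ g n)
  have key : ∀ n : ℕ, ENNReal.ofReal (∫ t in Set.Ioo (0:ℝ) T, g n t) ≤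
      (⨆ ζ : {ζ : ℝ → ℛ → ℝ //
        ContDiff ℝ 1 ζ ∧ HasCompactSupport ζ ∧ tsupport ζ ⊆ Set.Ioo 0 T},
      ENNReal.ofReal (∫ t in Set.Ioo (0:ℝ) T,
        ∑ r, ((ζ : ℝ → ℛ → ℝ) t r * dw t r
          - kbar (c t) r * (Real.exp ((ζ : ℝ → ℛ → ℝ) t r) - 1)))) := by
    intro n
    -- mollifiers
    set φb : ℕ → ContDiffBump (0:ℝ) := fun m =>
      ⟨((m:ℝ)+1)⁻¹, 2*((m:ℝ)+1)⁻¹, by positivity, by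
        have : (0:ℝ) < ((m:ℝ)+1)⁻¹ := by positivity
        linarith⟩ with hφb
    set ψ : ℕ → ℝ → ℛ → ℝ := fun m =>
      (φb m).normed volume ⋆[ContinuousLinearMap.lsmul ℝ ℝ, volume] ζn n with hψ
    have hζn_li : MeasureTheory.LocallyIntegrable (ζn n) volume := (hζn_int n).locallyIntegrable
    have hψ_smooth : ∀ m, ContDiff ℝ 1 (ψ m) := fun m =>
      (φb m).hasCompactSupport_normed.contDiff_convolution_left _
        ((φb m).contDiff_normed (n := 1)) hζn_li
    have hψ_tendsto : ∀ᵐ t ∂(volume : Measure ℝ),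
        Filter.Tendsto (fun m => ψ m t) Filter.atTop (𝓝 (ζn n t)) := by
      refine ContDiffBump.ae_convolution_tendsto_right_of_locallyIntegrable (K := 2)
        ?_ ?_ hζn_li
      · have h1 : Filter.Tendsto (fun m : ℕ => (m : ℝ) + 1) Filter.atTop Filter.atTop :=
          Filter.tendsto_atTop_add_const_right _ 1 tendsto_natCast_atTop_atTop
        have h2 := h1.inv_tendsto_atTop.const_mul 2
        rw [mul_zero] at h2
        exact h2
      · exact Filter.Eventually.of_forall fun m => le_rfl
    -- smooth truncation
    set bχ : ContDiffBump (0:ℝ) := ⟨(n:ℝ)+1, (n:ℝ)+2, by positivity, by linarith⟩ with hbχ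
    set χ : ℝ → ℝ := fun x => x * bχ x with hχ
    have hχ_smooth : ContDiff ℝ 1 χ := contDiff_id.mul bχ.contDiff
    have hχ_id : ∀ x : ℝ, |x| ≤ (n:ℝ)+1 → χ x = x := by
      intro x hx
      have h1 : bχ x = 1 := bχ.one_of_mem_closedBall
        (by simpa [Metric.mem_closedBall, Real.dist_eq] using hx)
      simp [hχ, h1]
    have hχ0 : χ 0 = 0 := by simp [hχ]
    have hχ_bd : ∀ x : ℝ, |χ x| ≤ (n:ℝ)+2 := by
      intro x
      rcases le_or_gt |x| ((n:ℝ)+2) with h | h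
      · calc |χ x| = |x| * |bχ x| := abs_mul _ _
          _ ≤ ((n:ℝ)+2) * 1 :=
              mul_le_mul h (by rw [abs_of_nonneg bχ.nonneg]; exact bχ.le_one)
                (abs_nonneg _) (by positivity)
          _ = (n:ℝ)+2 := mul_one _
      · have h1 : x ∉ Function.support bχ := by
          rw [bχ.support_eq]
          simp only [Metric.mem_ball, Real.dist_eq, sub_zero, not_lt]
          linarith
        have h2 : bχ x = 0 := Function.notMem_support.1 h1
        simp [hχ, h2]
        positivity
    -- cutoff
    have hδT2 : δ n < T/2 := hδ_lt n
    have hδp : 0 < δ n := hδ_pos n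
    set bc : ContDiffBump ((T/2 : ℝ)) :=
      ⟨T/2 - δ n, T/2 - δ n / 2, by linarith, by linarith⟩ with hbc
    have hbc_one : ∀ t ∈ Set.Icc (δ n) (T - δ n), bc t = 1 := by
      intro t ht
      refine bc.one_of_mem_closedBall ?_
      rw [Metric.mem_closedBall, Real.dist_eq, abs_le]
      constructor
      · simp only [hbc]; linarith [ht.1]
      · simp only [hbc]; linarith [ht.2]
    have hbc_supp : tsupport (bc : ℝ → ℝ) ⊆ Set.Ioo 0 T := by
      rw [bc.tsupport_eq]
      intro x hx
      rw [Metric.mem_closedBall, Real.dist_eq, abs_le] at hx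
      constructor
      · simp only [hbc] at hx; linarith [hx.1]
      · simp only [hbc] at hx; linarith [hx.2]
    -- the smooth test functions
    set ζf : ℕ → ℝ → ℛ → ℝ := fun m t r => bc t * χ (ψ m t r) with hζf
    have hζf_smooth : ∀ m, ContDiff ℝ 1 (ζf m) := by
      intro m
      refine contDiff_pi.2 fun r => ?_
      exact (bc.contDiff (n := 1)).mul (hχ_smooth.comp (contDiff_pi.1 (hψ_smooth m) r))
    have hζf_cont : ∀ m r, Continuous fun t => ζf m t r := fun m r =>
      (contDiff_pi.1 (hζf_smooth m) r).continuous
    have hζf_ts : ∀ m, tsupport (ζf m) ⊆ Set.Ioo 0 T := by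
      intro m
      refine subset_trans (closure_mono ?_) hbc_supp
      intro t ht
      simp only [Function.mem_support] at ht ⊢
      intro hbc0
      exact ht (funext fun r => by simp [hζf, hbc0])
    have hζf_cs : ∀ m, HasCompactSupport (ζf m) := fun m =>
      IsCompact.of_isClosed_subset (isCompact_Icc (a := (0:ℝ)) (b := T)) isClosed_closure
        (subset_trans (hζf_ts m) Set.Ioo_subset_Icc_self)
    have hζf_bd : ∀ m t r, |ζf m t r| ≤ (n:ℝ)+2 := by
      intro m t r
      calc |ζf m t r| = |bc t| * |χ (ψ m t r)| := abs_mul _ _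
        _ ≤ 1 * ((n:ℝ)+2) :=
            mul_le_mul (by rw [abs_of_nonneg bc.nonneg]; exact bc.le_one) (hχ_bd _)
              (abs_nonneg _) one_pos.le
        _ = (n:ℝ)+2 := one_mul _
    have hζf_tend : ∀ᵐ t ∂(volume.restrict (Set.Ioo 0 T)), ∀ r : ℛ,
        Filter.Tendsto (fun m => ζf m t r) Filter.atTop (𝓝 (ζn n t r)) := by
      refine ae_restrict_of_ae ?_
      filter_upwards [hψ_tendsto] with t ht r
      have h1 : Filter.Tendsto (fun m => ψ m t r) Filter.atTop (𝓝 (ζn n t r)) :=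
        ((continuous_apply r).tendsto _).comp ht
      have h2 : Filter.Tendsto (fun m => χ (ψ m t r)) Filter.atTop (𝓝 (χ (ζn n t r))) :=
        (hχ_smooth.continuous.tendsto _).comp h1
      have h3 := h2.const_mul (bc t)
      have h4 : bc t * χ (ζn n t r) = ζn n t r := by
        by_cases hmem : t ∈ Set.Icc (δ n) (T - δ n)
        · rw [hbc_one t hmem, one_mul, hχ_id _ ((hζn_bd n t r).trans (by linarith))]
        · rw [show ζn n t r = 0 from congrFun (hζn_supp n t hmem) r, hχ0, mul_zero]
      rw [h4] at h3
      exact h3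
    -- dominated convergence
    set F : ℕ → ℝ → ℝ := fun m t =>
      ∑ r, (ζf m t r * dm t r - Km t r * (Real.exp (ζf m t r) - 1)) with hF
    have hFtend : Filter.Tendsto (fun m => ∫ t in Set.Ioo (0:ℝ) T, F m t) Filter.atTop
        (𝓝 (∫ t in Set.Ioo (0:ℝ) T, g n t)) := by
      refine tendsto_integral_of_dominated_convergence
        (bound := fun t => (Fintype.card ℛ : ℝ) * (((n:ℝ)+2) * ‖dm t‖ + C * (Real.exp ((n:ℝ)+2) + 1)))
        ?_ ?_ ?_ ?_
      · intro m
        refine (Finset.measurable_sum _ fun r _ => ?_).aestronglyMeasurable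
        exact ((hζf_cont m r).measurable.mul (hdm_meas r)).sub
          ((hKm_measr r).mul (((hζf_cont m r).measurable.exp).sub measurable_const))
      · exact ((hdm_int.norm.const_mul _).add (integrable_const _)).const_mul _
      · intro m
        refine Filter.Eventually.of_forall fun t => ?_
        have hb : ∀ r : ℛ, |ζf m t r * dm t r - Km t r * (Real.exp (ζf m t r) - 1)|
            ≤ ((n:ℝ)+2) * ‖dm t‖ + C * (Real.exp ((n:ℝ)+2) + 1) := by
          intro r
          have h1 := hre_abs_le (dm t r) (Km t r) (ζf m t r) ((n:ℝ)+2) C (hζf_bd m t r)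
            (hKm_nonneg t r) (hKmC t r)
          refine h1.trans (add_le_add (mul_le_mul_of_nonneg_left ?_ (by positivity)) le_rfl)
          rw [← Real.norm_eq_abs]; exact norm_le_pi_norm (dm t) r
        calc ‖F m t‖ = |∑ r, (ζf m t r * dm t r - Km t r * (Real.exp (ζf m t r) - 1))| := rfl
          _ ≤ ∑ r, |ζf m t r * dm t r - Km t r * (Real.exp (ζf m t r) - 1)| :=
              Finset.abs_sum_le_sum_abs _ _
          _ ≤ ∑ _r : ℛ, (((n:ℝ)+2) * ‖dm t‖ + C * (Real.exp ((n:ℝ)+2) + 1)) :=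
              Finset.sum_le_sum fun r _ => hb r
          _ = (Fintype.card ℛ : ℝ) * (((n:ℝ)+2) * ‖dm t‖ + C * (Real.exp ((n:ℝ)+2) + 1)) := by
              rw [Finset.sum_const, nsmul_eq_mul]; simp
      · filter_upwards [hζf_tend] with t ht
        refine tendsto_finset_sum _ fun r _ => ?_
        refine Filter.Tendsto.sub ((ht r).mul_const _) ?_
        refine Filter.Tendsto.const_mul _ (Filter.Tendsto.sub ?_ tendsto_const_nhds)
        exact (Real.continuous_exp.tendsto _).comp (ht r)
    -- each term is dominated by the supremum
    have hle : ∀ m, ENNReal.ofReal (∫ t in Set.Ioo (0:ℝ) T, F m t) ≤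
        (⨆ ζ : {ζ : ℝ → ℛ → ℝ //
          ContDiff ℝ 1 ζ ∧ HasCompactSupport ζ ∧ tsupport ζ ⊆ Set.Ioo 0 T},
        ENNReal.ofReal (∫ t in Set.Ioo (0:ℝ) T,
          ∑ r, ((ζ : ℝ → ℛ → ℝ) t r * dw t r
            - kbar (c t) r * (Real.exp ((ζ : ℝ → ℛ → ℝ) t r) - 1)))) := by
      intro m
      have hmem : ContDiff ℝ 1 (ζf m) ∧ HasCompactSupport (ζf m) ∧
          tsupport (ζf m) ⊆ Set.Ioo 0 T := ⟨hζf_smooth m, hζf_cs m, hζf_ts m⟩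
      have h := le_iSup (fun ζ : {ζ : ℝ → ℛ → ℝ //
          ContDiff ℝ 1 ζ ∧ HasCompactSupport ζ ∧ tsupport ζ ⊆ Set.Ioo 0 T} =>
        ENNReal.ofReal (∫ t in Set.Ioo (0:ℝ) T,
          ∑ r, ((ζ : ℝ → ℛ → ℝ) t r * dw t r
            - kbar (c t) r * (Real.exp ((ζ : ℝ → ℛ → ℝ) t r) - 1)))) ⟨ζf m, hmem⟩
      have heq : (∫ t in Set.Ioo (0:ℝ) T,
          ∑ r, (ζf m t r * dw t r - kbar (c t) r * (Real.exp (ζf m t r) - 1)))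
          = ∫ t in Set.Ioo (0:ℝ) T, F m t := by
        refine integral_congr_ae ?_
        filter_upwards [hdm_ae, ae_restrict_mem measurableSet_Ioo] with t h1 h2
        refine Finset.sum_congr rfl fun r _ => ?_
        rw [congrFun h1 r, congrFun (hKm_eq t (Set.Ioo_subset_Icc_self h2)).symm r]
      rw [heq] at h
      exact h
    exact le_of_tendsto ((ENNReal.continuous_ofReal.tendsto _).comp hFtend)
      (Filter.Eventually.of_forall hle)
  -- conclusion
  refine le_antisymm ?_ ?_
  · -- sup ≤ entropy integral
    refine iSup_le fun ζ0 => ?_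
    obtain ⟨ζ, hζsm, hζcs, hζsupp⟩ := ζ0
    by_cases hint : IntegrableOn (fun t =>
        ∑ r, (ζ t r * dw t r - kbar (c t) r * (Real.exp (ζ t r) - 1))) (Set.Ioo 0 T)
    · have hmax : IntegrableOn (fun t =>
          max (∑ r, (ζ t r * dw t r - kbar (c t) r * (Real.exp (ζ t r) - 1))) 0)
          (Set.Ioo 0 T) := hint.pos_part
      calc ENNReal.ofReal (∫ t in Set.Ioo (0:ℝ) T,
            ∑ r, (ζ t r * dw t r - kbar (c t) r * (Real.exp (ζ t r) - 1)))
          ≤ ENNReal.ofReal (∫ t in Set.Ioo (0:ℝ) T,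
            max (∑ r, (ζ t r * dw t r - kbar (c t) r * (Real.exp (ζ t r) - 1))) 0) :=
            ENNReal.ofReal_le_ofReal (integral_mono hint hmax fun t => le_max_left _ _)
        _ = ∫⁻ t in Set.Ioo (0:ℝ) T, ENNReal.ofReal
            (max (∑ r, (ζ t r * dw t r - kbar (c t) r * (Real.exp (ζ t r) - 1))) 0) :=
            ofReal_integral_eq_lintegral_ofReal hmax
              (Filter.Eventually.of_forall fun t => le_max_right _ _)
        _ = ∫⁻ t in Set.Ioo (0:ℝ) T, ENNReal.ofReal
            (∑ r, (ζ t r * dw t r - kbar (c t) r * (Real.exp (ζ t r) - 1))) :=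
            lintegral_congr fun t => enn_ofReal_max_zero _
        _ ≤ ∫⁻ t in Set.Ioo (0:ℝ) T, ∑ r, bes (dw t r) (kbar (c t) r) := by
            refine lintegral_mono_ae ?_
            filter_upwards [hdw_nonneg, ae_restrict_mem measurableSet_Ioo] with t h1 h2
            refine (enn_ofReal_sum_le _ _).trans (Finset.sum_le_sum fun r _ => ?_)
            exact hre_le_bes _ _ _ (h1 r)
              (hk_nonneg _ (hcpos t (Set.Ioo_subset_Icc_self h2)) r)
    · rw [integral_undef hint]
      simp
  · -- entropy integral ≤ sup : Fatou
    have hRR : (∫⁻ t in Set.Ioo (0:ℝ) T, ∑ r, bes (dw t r) (kbar (c t) r)) =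
        ∫⁻ t in Set.Ioo (0:ℝ) T, ∑ r, bes (dm t r) (Km t r) := by
      refine lintegral_congr_ae ?_
      filter_upwards [hdm_ae, ae_restrict_mem measurableSet_Ioo] with t h1 h2
      exact Finset.sum_congr rfl fun r _ => by
        rw [congrFun h1 r, congrFun (hKm_eq t (Set.Ioo_subset_Icc_self h2)).symm r]
    rw [hRR]
    have hpt : ∀ᵐ t ∂(volume.restrict (Set.Ioo 0 T)),
        (∑ r, bes (dm t r) (Km t r)) =
          Filter.liminf (fun m : ℕ => ENNReal.ofReal (g m t)) Filter.atTop := by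
      filter_upwards [hdm_nonneg, ae_restrict_mem measurableSet_Ioo] with t h1 h2
      have hev : ∀ᶠ m : ℕ in Filter.atTop, t ∈ Set.Icc (δ m) (T - δ m) := by
        have hmin : (0:ℝ) < min t (T - t) := lt_min h2.1 (by linarith [h2.2])
        filter_upwards [hδ_tend.eventually_lt_const hmin] with m hm
        constructor
        · linarith [min_le_left t (T - t)]
        · linarith [min_le_right t (T - t)]
      have hco : (fun m : ℕ => ∑ r, ENNReal.ofReal
          (zstar m (dm t r) (Km t r) * dm t r
            - Km t r * (Real.exp (zstar m (dm t r) (Km t r)) - 1)))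
          =ᶠ[Filter.atTop] fun m : ℕ => ENNReal.ofReal (g m t) := by
        filter_upwards [hev] with m hm
        have hz : ∀ r : ℛ, ζn m t r = zstar m (dm t r) (Km t r) := fun r => if_pos hm
        have hgg : g m t = ∑ r, (zstar m (dm t r) (Km t r) * dm t r
            - Km t r * (Real.exp (zstar m (dm t r) (Km t r)) - 1)) :=
          Finset.sum_congr rfl fun r _ => by rw [hz r]
        rw [hgg]
        exact (ENNReal.ofReal_sum_of_nonneg fun r _ =>
          hre_zstar_nonneg m _ _ (h1 r) (hKm_nonneg t r)).symm
      have htd : Filter.Tendsto (fun m : ℕ => ENNReal.ofReal (g m t)) Filter.atTop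
          (𝓝 (∑ r, bes (dm t r) (Km t r))) := by
        have hsum := tendsto_finset_sum (Finset.univ : Finset ℛ)
          (fun r _ => tendsto_hre_zstar (dm t r) (Km t r) (h1 r) (hKm_nonneg t r))
        exact Filter.Tendsto.congr' hco hsum
      exact htd.liminf_eq.symm
    calc (∫⁻ t in Set.Ioo (0:ℝ) T, ∑ r, bes (dm t r) (Km t r))
        = ∫⁻ t in Set.Ioo (0:ℝ) T,
            Filter.liminf (fun m : ℕ => ENNReal.ofReal (g m t)) Filter.atTop :=
          lintegral_congr_ae hpt
      _ ≤ Filter.liminf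
            (fun m : ℕ => ∫⁻ t in Set.Ioo (0:ℝ) T, ENNReal.ofReal (g m t)) Filter.atTop :=
          lintegral_liminf_le fun m => ENNReal.measurable_ofReal.comp (hg_meas m)
      _ ≤ _ := by
          refine Filter.liminf_le_of_frequently_le' (Filter.Frequently.of_forall fun m => ?_)
          rw [← ofReal_integral_eq_lintegral_ofReal (hg_int m) (hg_nonneg m)]
          exact key m
end

section
/- Let ℛ be a finite set and let j, k : (0,T) → ℝ^ℛ_{≥0} be measurable with every component of j and of k Lebesgue-integrable. Then sup over ζ ∈ C^1_c((0,T); ℝ^ℛ) of ∫_0^T [ζ(t)·j(t) − Σ_{r∈ℛ} k^r(t)(e^{ζ^r(t)} − 1)] dt equals sup over ζ ∈ L^∞((0,T); ℝ^ℛ) of the same expression. -/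
open MeasureTheory Real Set Filter

section Aux

variable {ℛ : Type*} [Fintype ℛ]

private lemma poly_contDiff (p : Polynomial ℝ) : ContDiff ℝ 1 fun x => p.eval x := by
  induction p using Polynomial.induction_on' with
  | add p q hp hq => simpa [Polynomial.eval_add] using hp.add hq
  | monomial n a => simpa [Polynomial.eval_monomial] using
      (contDiff_const (c := a)).mul (contDiff_id.pow n)

private lemma abs_term_le {x a b C : ℝ} (hC : |x| ≤ C) :
    |x * a - b * (Real.exp x - 1)| ≤ C * |a| + (Real.exp C + 1) * |b| := by
  have h2 : |Real.exp x - 1| ≤ Real.exp C + 1 := by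
    have h := abs_sub (Real.exp x) 1
    rw [abs_of_pos (Real.exp_pos x), abs_one] at h
    have hx : Real.exp x ≤ Real.exp C := Real.exp_le_exp.2 (abs_le.1 hC).2
    linarith
  calc |x * a - b * (Real.exp x - 1)| ≤ |x * a| + |b * (Real.exp x - 1)| := abs_sub _ _
    _ ≤ C * |a| + (Real.exp C + 1) * |b| := by
        rw [abs_mul, abs_mul]
        have h3 : |x| * |a| ≤ C * |a| := mul_le_mul_of_nonneg_right hC (abs_nonneg a)
        have h4 : |b| * |Real.exp x - 1| ≤ |b| * (Real.exp C + 1) :=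
          mul_le_mul_of_nonneg_left h2 (abs_nonneg b)
        linarith

/-- Dominated convergence for the functional. -/
private lemma tendsto_F (T : ℝ) (j k : ℝ → ℛ → ℝ)
    (hj_meas : Measurable j) (hk_meas : Measurable k)
    (hj_int : IntegrableOn j (Set.Ioo 0 T)) (hk_int : IntegrableOn k (Set.Ioo 0 T))
    (ζ : ℕ → ℝ → ℛ → ℝ) (ζ' : ℝ → ℛ → ℝ) (C : ℝ)
    (hmeas : ∀ n, AEStronglyMeasurable (ζ n) (volume.restrict (Set.Ioo 0 T)))
    (hmeas' : AEStronglyMeasurable ζ' (volume.restrict (Set.Ioo 0 T)))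
    (hbd : ∀ n, ∀ᵐ t ∂(volume.restrict (Set.Ioo 0 T)), ∀ r, |ζ n t r| ≤ C)
    (hlim : ∀ᵐ t ∂(volume.restrict (Set.Ioo 0 T)),
      Tendsto (fun n => ζ n t) atTop (nhds (ζ' t))) :
    Tendsto (fun n => ∫ t in Set.Ioo (0:ℝ) T,
        ∑ r, (ζ n t r * j t r - k t r * (Real.exp (ζ n t r) - 1))) atTop
      (nhds (∫ t in Set.Ioo (0:ℝ) T,
        ∑ r, (ζ' t r * j t r - k t r * (Real.exp (ζ' t r) - 1)))) := by
  have hjr : ∀ r : ℛ, AEStronglyMeasurable (fun t => j t r)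
      (volume.restrict (Set.Ioo 0 T)) :=
    fun r => ((measurable_pi_apply r).comp hj_meas).aestronglyMeasurable
  have hkr : ∀ r : ℛ, AEStronglyMeasurable (fun t => k t r)
      (volume.restrict (Set.Ioo 0 T)) :=
    fun r => ((measurable_pi_apply r).comp hk_meas).aestronglyMeasurable
  apply tendsto_integral_of_dominated_convergence
      (fun t => ∑ r, (C * |j t r| + (Real.exp C + 1) * |k t r|))
  · intro n
    apply Finset.aestronglyMeasurable_fun_sum
    intro r _
    have hζ : AEStronglyMeasurable (fun t => ζ n t r) (volume.restrict (Set.Ioo 0 T)) :=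
      (continuous_apply r).comp_aestronglyMeasurable (hmeas n)
    exact (hζ.mul (hjr r)).sub ((hkr r).mul
      ((Real.continuous_exp.comp_aestronglyMeasurable hζ).sub aestronglyMeasurable_const))
  · apply integrable_finset_sum
    intro r _
    have hj' : Integrable (fun t => j t r) (volume.restrict (Set.Ioo 0 T)) :=
      (ContinuousLinearMap.proj (R := ℝ) (φ := fun _ : ℛ => ℝ) r).integrable_comp hj_int
    have hk' : Integrable (fun t => k t r) (volume.restrict (Set.Ioo 0 T)) :=
      (ContinuousLinearMap.proj (R := ℝ) (φ := fun _ : ℛ => ℝ) r).integrable_comp hk_int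
    exact (hj'.abs.const_mul C).add (hk'.abs.const_mul _)
  · intro n
    filter_upwards [hbd n] with t ht
    calc ‖∑ r, (ζ n t r * j t r - k t r * (Real.exp (ζ n t r) - 1))‖
        ≤ ∑ r, ‖ζ n t r * j t r - k t r * (Real.exp (ζ n t r) - 1)‖ := norm_sum_le _ _
      _ ≤ ∑ r, (C * |j t r| + (Real.exp C + 1) * |k t r|) := by
          apply Finset.sum_le_sum
          intro r _
          rw [Real.norm_eq_abs]
          exact abs_term_le (ht r)
  · filter_upwards [hlim] with t ht
    apply tendsto_finset_sum
    intro r _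
    have h := tendsto_pi_nhds.1 ht r
    exact (h.mul tendsto_const_nhds).sub
      (tendsto_const_nhds.mul (((Real.continuous_exp.tendsto _).comp h).sub tendsto_const_nhds))

/-- Step B: approximate a bounded continuous function by smooth compactly supported ones. -/
private lemma exists_smooth_of_cont (T : ℝ) (hT : 0 < T) (j k : ℝ → ℛ → ℝ)
    (hj_meas : Measurable j) (hk_meas : Measurable k)
    (hj_int : IntegrableOn j (Set.Ioo 0 T)) (hk_int : IntegrableOn k (Set.Ioo 0 T))
    (u : ℝ → ℛ → ℝ) (hu : Continuous u) (C : ℝ)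
    (hbd : ∀ t r, |u t r| ≤ C) (ε : ℝ) (hε : 0 < ε) :
    ∃ h : ℝ → ℛ → ℝ, ContDiff ℝ 1 h ∧ HasCompactSupport h ∧ tsupport h ⊆ Set.Ioo 0 T ∧
      (∫ t in Set.Ioo (0:ℝ) T, ∑ r, (u t r * j t r - k t r * (Real.exp (u t r) - 1))) - ε
        ≤ ∫ t in Set.Ioo (0:ℝ) T, ∑ r, (h t r * j t r - k t r * (Real.exp (h t r) - 1)) := by
  classical
  choose p hp using fun (n : ℕ) (r : ℛ) =>
    exists_polynomial_near_of_continuousOn 0 T (fun t => u t r)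
      ((continuous_apply r).comp hu).continuousOn (1 / (n + 1)) (by positivity)
  -- bump cutoffs
  have hT2 : (0:ℝ) < T / 2 := by linarith
  have key : ∀ n : ℕ, (0:ℝ) < 1 - 1 / (n + 2) ∧ (1:ℝ) - 1 / (n+2) < 1 - 1 / (n+3) ∧
      (1:ℝ) - 1/(n+3) < 1 := by
    intro n
    have h2 : (0:ℝ) < (n:ℝ) + 2 := by positivity
    have h3 : (0:ℝ) < (n:ℝ) + 3 := by positivity
    refine ⟨?_, ?_, ?_⟩
    · have : (1:ℝ) / (n + 2) < 1 := by rw [div_lt_one h2]; linarith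
      linarith
    · have : (1:ℝ) / (n + 3) < 1 / (n + 2) := by
        apply one_div_lt_one_div_of_lt h2; linarith
      linarith
    · have : (0:ℝ) < 1 / (n+3) := by positivity
      linarith
  let B : ℕ → ContDiffBump (T / 2 : ℝ) := fun n =>
    { rIn := T / 2 * (1 - 1 / (n + 2))
      rOut := T / 2 * (1 - 1 / (n + 3))
      rIn_pos := mul_pos hT2 (key n).1
      rIn_lt_rOut := by
        have := (key n).2.1
        exact mul_lt_mul_of_pos_left this hT2 }
  have hrOut : ∀ n, (B n).rOut < T / 2 := fun n => by
    have := (key n).2.2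
    calc T / 2 * (1 - 1/(n+3)) < T / 2 * 1 := mul_lt_mul_of_pos_left this hT2
      _ = T / 2 := mul_one _
  set h : ℕ → ℝ → ℛ → ℝ := fun n t r => (B n) t * (p n r).eval t with hh
  have hsmooth : ∀ n, ContDiff ℝ 1 (h n) := fun n =>
    contDiff_pi.2 fun r => ((B n).contDiff (n := 1)).mul (poly_contDiff _)
  have hsupp : ∀ n, tsupport (h n) ⊆ Set.Ioo 0 T := by
    intro n
    have h1 : Function.support (h n) ⊆ Metric.ball (T/2) ((B n).rOut) := by
      intro t ht
      by_contra hmem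
      apply ht
      have hB0 : (B n) t = 0 := by
        rw [← Function.notMem_support, (B n).support_eq]; exact hmem
      funext r
      simp [hh, hB0]
    refine (closure_mono h1).trans ?_
    refine (Metric.closure_ball_subset_closedBall).trans ?_
    rw [Real.closedBall_eq_Icc]
    intro x hx
    obtain ⟨hx1, hx2⟩ := hx
    have h2 := hrOut n
    have h3 := (B n).rOut_pos
    exact ⟨by linarith, by linarith⟩
  have hcs : ∀ n, HasCompactSupport (h n) := by
    intro n
    apply IsCompact.of_isClosed_subset (isCompact_Icc (a := (0:ℝ)) (b := T))
      (isClosed_tsupport _)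
    exact (hsupp n).trans Ioo_subset_Icc_self
  -- bound on Ioo
  have hbd' : ∀ n, ∀ t ∈ Set.Ioo (0:ℝ) T, ∀ r, |h n t r| ≤ C + 1 := by
    intro n t ht r
    have htIcc : t ∈ Set.Icc (0:ℝ) T := Ioo_subset_Icc_self ht
    have h1 : |(p n r).eval t| ≤ C + 1 := by
      have h2 := hp n r t htIcc
      have h3 : (1:ℝ)/(n+1) ≤ 1 := by
        rw [div_le_one (by positivity)]; linarith [Nat.cast_nonneg (α := ℝ) n]
      have h4 := hbd t r
      calc |(p n r).eval t| = |((p n r).eval t - u t r) + u t r| := by ring_nf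
        _ ≤ |(p n r).eval t - u t r| + |u t r| := abs_add_le _ _
        _ ≤ C + 1 := by linarith
    have hB1 : |(B n) t| ≤ 1 := by
      rw [abs_of_nonneg (B n).nonneg]; exact (B n).le_one
    calc |h n t r| = |(B n) t| * |(p n r).eval t| := by rw [hh]; exact abs_mul _ _
      _ ≤ 1 * (C + 1) := by
          apply mul_le_mul hB1 h1 (abs_nonneg _)
          norm_num
      _ = C + 1 := one_mul _
  -- pointwise convergence on Ioo
  have hlim : ∀ t ∈ Set.Ioo (0:ℝ) T, Tendsto (fun n => h n t) atTop (nhds (u t)) := by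
    intro t ht
    apply tendsto_pi_nhds.2
    intro r
    have htIcc : t ∈ Set.Icc (0:ℝ) T := Ioo_subset_Icc_self ht
    have hdist : |t - T/2| < T/2 := by
      obtain ⟨ht1, ht2⟩ := ht
      rw [abs_lt]
      exact ⟨by linarith, by linarith⟩
    have hrIn : Tendsto (fun n : ℕ => (B n).rIn) atTop (nhds (T/2)) := by
      have h1 : Tendsto (fun n : ℕ => (1:ℝ) / (n + 2)) atTop (nhds 0) := by
        have h3 := (tendsto_one_div_add_atTop_nhds_zero_nat (𝕜 := ℝ)).comp (tendsto_add_atTop_nat 1)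
        apply h3.congr
        intro n
        simp only [Function.comp_apply]
        push_cast
        ring
      have h2 : Tendsto (fun n : ℕ => T/2 * (1 - 1/((n:ℝ)+2))) atTop
          (nhds (T/2 * (1 - 0))) := tendsto_const_nhds.mul (tendsto_const_nhds.sub h1)
      simp only [sub_zero, mul_one] at h2
      exact h2
    have hev : ∀ᶠ n in atTop, (B n) t = 1 := by
      filter_upwards [hrIn.eventually (eventually_ge_nhds hdist)] with n hn
      exact (B n).one_of_mem_closedBall (by rwa [Metric.mem_closedBall, Real.dist_eq])
    have h1 : Tendsto (fun n => (p n r).eval t) atTop (nhds (u t r)) := by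
      have h2 : Tendsto (fun n : ℕ => (p n r).eval t - u t r) atTop (nhds 0) := by
        apply squeeze_zero_norm (fun n => (hp n r t htIcc).le)
          tendsto_one_div_add_atTop_nhds_zero_nat
      have h3 := h2.add_const (u t r)
      simpa using h3
    apply h1.congr'
    filter_upwards [hev] with n hn
    simp [hh, hn]
  -- dominated convergence
  have hmain := tendsto_F T j k hj_meas hk_meas hj_int hk_int h u (C + 1)
    (fun n => ((hsmooth n).continuous).aestronglyMeasurable)
    hu.aestronglyMeasurable
    (fun n => by
      filter_upwards [ae_restrict_mem measurableSet_Ioo] with t ht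
      exact hbd' n t ht)
    (by
      filter_upwards [ae_restrict_mem measurableSet_Ioo] with t ht
      exact hlim t ht)
  have hev : ∀ᶠ n in atTop,
      (∫ t in Set.Ioo (0:ℝ) T, ∑ r, (u t r * j t r - k t r * (Real.exp (u t r) - 1))) - ε
        < ∫ t in Set.Ioo (0:ℝ) T, ∑ r, (h n t r * j t r - k t r * (Real.exp (h n t r) - 1)) :=
    hmain.eventually (eventually_gt_nhds (by linarith))
  obtain ⟨n, hn⟩ := hev.exists
  exact ⟨h n, hsmooth n, hcs n, hsupp n, hn.le⟩

end Aux

/-- Step A: approximate a bounded measurable function by bounded continuous ones. -/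
private lemma exists_cont {ℛ : Type*} [Fintype ℛ] (T : ℝ) (hT : 0 < T) (j k : ℝ → ℛ → ℝ)
    (hj_meas : Measurable j) (hk_meas : Measurable k)
    (hj_int : IntegrableOn j (Set.Ioo 0 T)) (hk_int : IntegrableOn k (Set.Ioo 0 T))
    (ζ : ℝ → ℛ → ℝ) (hζ : Measurable ζ) (C : ℝ) (hC0 : 0 ≤ C)
    (hbd : ∀ t r, |ζ t r| ≤ C) (ε : ℝ) (hε : 0 < ε) :
    ∃ u : ℝ → ℛ → ℝ, Continuous u ∧ (∀ t r, |u t r| ≤ C) ∧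
      (∫ t in Set.Ioo (0:ℝ) T, ∑ r, (ζ t r * j t r - k t r * (Real.exp (ζ t r) - 1))) - ε
        ≤ ∫ t in Set.Ioo (0:ℝ) T, ∑ r, (u t r * j t r - k t r * (Real.exp (u t r) - 1)) := by
  classical
  set η : ℝ → ℛ → ℝ := (Set.Ioo (0:ℝ) T).indicator ζ with hη
  have hηmeas : Measurable η := hζ.indicator measurableSet_Ioo
  have hηbd : ∀ t r, |η t r| ≤ C := by
    intro t r
    by_cases ht : t ∈ Set.Ioo (0:ℝ) T
    · rw [hη, Set.indicator_of_mem ht]; exact hbd t r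
    · rw [hη, Set.indicator_of_notMem ht]; simpa using hC0
  have hηint : Integrable η volume := by
    rw [hη, integrable_indicator_iff measurableSet_Ioo]
    refine Integrable.mono' (g := fun _ => C)
      (integrableOn_const measure_Ioo_lt_top.ne)
      (hζ.aestronglyMeasurable.restrict) ?_
    filter_upwards with t
    exact (pi_norm_le_iff_of_nonneg hC0).2 fun r => by
      rw [Real.norm_eq_abs]; exact hbd t r
  have hmem : MemLp η 1 volume := memLp_one_iff_integrable.2 hηint
  have happrox : ∀ m : ℕ, ∃ g : ℝ → ℛ → ℝ, Continuous g ∧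
      eLpNorm (η - g) 1 volume ≤ ENNReal.ofReal (1/(m+1)) := by
    intro m
    obtain ⟨g, _, hg2, hg3, _⟩ := hmem.exists_hasCompactSupport_eLpNorm_sub_le
      ENNReal.one_ne_top (ε := ENNReal.ofReal (1/(m+1)))
      (ne_of_gt (ENNReal.ofReal_pos.2 (by positivity)))
    exact ⟨g, hg3, hg2⟩
  choose g hgc hgl using happrox
  set v : ℕ → ℝ → ℛ → ℝ := fun m t r => max (-C) (min C (g m t r)) with hv
  have hvc : ∀ m, Continuous (v m) := fun m => continuous_pi fun r =>
    continuous_const.max (continuous_const.min ((continuous_apply r).comp (hgc m)))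
  have hvbd : ∀ m t r, |v m t r| ≤ C := by
    intro m t r
    rw [abs_le]
    exact ⟨le_max_left _ _, max_le (by linarith) (min_le_left _ _)⟩
  have hlip : LipschitzWith 1 (fun x : ℝ => max (-C) (min C x)) :=
    (LipschitzWith.id.const_min C).const_max (-C)
  have hcontr : ∀ m t r, |η t r - v m t r| ≤ |η t r - g m t r| := by
    intro m t r
    have h2 := abs_le.1 (hηbd t r)
    have h1 : η t r = max (-C) (min C (η t r)) := by
      rw [min_eq_right h2.2, max_eq_right h2.1]
    calc |η t r - v m t r|
        = dist (max (-C) (min C (η t r))) (max (-C) (min C (g m t r))) := by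
          rw [← h1, Real.dist_eq, hv]
      _ ≤ 1 * dist (η t r) (g m t r) := hlip.dist_le_mul _ _
      _ = |η t r - g m t r| := by rw [one_mul, Real.dist_eq]
  have hvl : ∀ m, eLpNorm (η - v m) 1 volume ≤ ENNReal.ofReal (1/(m+1)) := by
    intro m
    refine (eLpNorm_mono fun t => ?_).trans (hgl m)
    simp only [Pi.sub_apply]
    refine (pi_norm_le_iff_of_nonneg (norm_nonneg _)).2 fun r => ?_
    calc ‖(η t - v m t) r‖ = |η t r - v m t r| := by simp [Real.norm_eq_abs]
      _ ≤ |η t r - g m t r| := hcontr m t r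
      _ = ‖(η t - g m t) r‖ := by simp [Real.norm_eq_abs]
      _ ≤ ‖η t - g m t‖ := norm_le_pi_norm _ r
  have htend0 : Tendsto (fun m => eLpNorm (v m - η) 1 volume) atTop (nhds 0) := by
    have h1 : Tendsto (fun m : ℕ => ENNReal.ofReal (1/(m+1))) atTop (nhds 0) := by
      rw [← ENNReal.ofReal_zero]
      exact ENNReal.tendsto_ofReal tendsto_one_div_add_atTop_nhds_zero_nat
    exact tendsto_of_tendsto_of_tendsto_of_le_of_le tendsto_const_nhds h1
      (fun m => zero_le)
      (fun m => le_trans (eLpNorm_sub_comm _ _ _ _).le (hvl m))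
  have htm : TendstoInMeasure volume v atTop η :=
    tendstoInMeasure_of_tendsto_eLpNorm_of_ne_top one_ne_zero ENNReal.one_ne_top
      (fun m => (hvc m).aestronglyMeasurable) hηmeas.aestronglyMeasurable htend0
  obtain ⟨ns, hns, hae⟩ := htm.exists_seq_tendsto_ae
  have hae' : ∀ᵐ t ∂(volume.restrict (Set.Ioo (0:ℝ) T)),
      Tendsto (fun i => v (ns i) t) atTop (nhds (ζ t)) := by
    filter_upwards [ae_restrict_of_ae hae, ae_restrict_mem measurableSet_Ioo] with t h1 h2
    rwa [hη, Set.indicator_of_mem h2] at h1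
  have hmain := tendsto_F T j k hj_meas hk_meas hj_int hk_int (fun i => v (ns i)) ζ C
    (fun i => (hvc (ns i)).aestronglyMeasurable)
    (hζ.aestronglyMeasurable.restrict)
    (fun i => Filter.Eventually.of_forall fun t r => hvbd (ns i) t r)
    hae'
  have hev := hmain.eventually (eventually_gt_nhds
    (show (∫ t in Set.Ioo (0:ℝ) T,
        ∑ r, (ζ t r * j t r - k t r * (Real.exp (ζ t r) - 1))) - ε
      < ∫ t in Set.Ioo (0:ℝ) T,
        ∑ r, (ζ t r * j t r - k t r * (Real.exp (ζ t r) - 1)) by linarith))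
  obtain ⟨i, hi⟩ := hev.exists
  exact ⟨v (ns i), hvc (ns i), fun t r => hvbd _ t r, hi.le⟩


/-- for measurable, componentwise integrable `j, k : (0,T) → ℝ^ℛ₊`,
the supremum over `ζ ∈ C¹_c((0,T); ℝ^ℛ)` of
`∫₀ᵀ [ζ(t)·j(t) − Σ_r k^r(t)(e^{ζ^r(t)} − 1)] dt` equals the supremum over bounded
measurable (`L^∞`) `ζ` of the same expression. -/
theorem stmt7
    {ℛ : Type*} [Fintype ℛ]
    (T : ℝ) (hT : 0 < T)
    (j k : ℝ → ℛ → ℝ)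
    (hj_meas : Measurable j) (hk_meas : Measurable k)
    (hj_nonneg : ∀ t ∈ Set.Ioo (0:ℝ) T, ∀ r, 0 ≤ j t r)
    (hk_nonneg : ∀ t ∈ Set.Ioo (0:ℝ) T, ∀ r, 0 ≤ k t r)
    (hj_int : IntegrableOn j (Set.Ioo 0 T))
    (hk_int : IntegrableOn k (Set.Ioo 0 T)) :
    (⨆ ζ : {ζ : ℝ → ℛ → ℝ //
        ContDiff ℝ 1 ζ ∧ HasCompactSupport ζ ∧ tsupport ζ ⊆ Set.Ioo 0 T},
      ENNReal.ofReal (∫ t in Set.Ioo (0:ℝ) T,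
        ∑ r, ((ζ : ℝ → ℛ → ℝ) t r * j t r
          - k t r * (Real.exp ((ζ : ℝ → ℛ → ℝ) t r) - 1))))
    = ⨆ ζ : {ζ : ℝ → ℛ → ℝ // Measurable ζ ∧ ∃ C : ℝ, ∀ t r, |ζ t r| ≤ C},
      ENNReal.ofReal (∫ t in Set.Ioo (0:ℝ) T,
        ∑ r, ((ζ : ℝ → ℛ → ℝ) t r * j t r
          - k t r * (Real.exp ((ζ : ℝ → ℛ → ℝ) t r) - 1))) := by
  apply le_antisymm
  · -- easy direction: smooth compactly supported functions are bounded measurable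
    apply iSup_le
    rintro ⟨ζ, hζ1, hζ2, hζ3⟩
    obtain ⟨C, hC⟩ := hζ2.exists_bound_of_continuous hζ1.continuous
    have hbd : ∀ t r, |ζ t r| ≤ C := fun t r => by
      have := (norm_le_pi_norm (ζ t) r).trans (hC t)
      rwa [Real.norm_eq_abs] at this
    exact le_iSup_of_le ⟨ζ, hζ1.continuous.measurable, C, hbd⟩ le_rfl
  · -- hard direction
    apply iSup_le
    rintro ⟨ζ, hζmeas, C, hC⟩
    apply ENNReal.le_of_forall_pos_le_add
    intro ε hε _
    have hεR : (0:ℝ) < (ε : ℝ) := hε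
    have hC0 : 0 ≤ max C 0 := le_max_right _ _
    have hbd' : ∀ t r, |ζ t r| ≤ max C 0 := fun t r => (hC t r).trans (le_max_left _ _)
    obtain ⟨u, hu1, hu2, hu3⟩ := exists_cont T hT j k hj_meas hk_meas hj_int hk_int
      ζ hζmeas (max C 0) hC0 hbd' ((ε : ℝ)/2) (by linarith)
    obtain ⟨h, hh1, hh2, hh3, hh4⟩ := exists_smooth_of_cont T hT j k hj_meas hk_meas
      hj_int hk_int u hu1 (max C 0) hu2 ((ε : ℝ)/2) (by linarith)
    calc ENNReal.ofReal (∫ t in Set.Ioo (0:ℝ) T,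
          ∑ r, (ζ t r * j t r - k t r * (Real.exp (ζ t r) - 1)))
        ≤ ENNReal.ofReal ((∫ t in Set.Ioo (0:ℝ) T,
            ∑ r, (h t r * j t r - k t r * (Real.exp (h t r) - 1))) + (ε : ℝ)) :=
          ENNReal.ofReal_le_ofReal (by linarith)
      _ ≤ ENNReal.ofReal (∫ t in Set.Ioo (0:ℝ) T,
            ∑ r, (h t r * j t r - k t r * (Real.exp (h t r) - 1)))
          + ENNReal.ofReal (ε : ℝ) := ENNReal.ofReal_add_le
      _ ≤ (⨆ ζ : {ζ : ℝ → ℛ → ℝ //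
            ContDiff ℝ 1 ζ ∧ HasCompactSupport ζ ∧ tsupport ζ ⊆ Set.Ioo 0 T},
          ENNReal.ofReal (∫ t in Set.Ioo (0:ℝ) T,
            ∑ r, ((ζ : ℝ → ℛ → ℝ) t r * j t r
              - k t r * (Real.exp ((ζ : ℝ → ℛ → ℝ) t r) - 1)))) + ε := by
          refine add_le_add (le_iSup_of_le ⟨h, hh1, hh2, hh3⟩ le_rfl) ?_
          rw [ENNReal.ofReal_coe_nnreal]
end
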